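/- arXiv:2504.18767 — 7 statements merged into one kernel-verified Lean document; each statement's English description precedes it below -/
import Mathlib

section
/- Let G=(V,E) be an undirected graph with an orientation of each edge, and suppose the orientation is k-cut-balanced, i.e., for every nonempty proper subset U of V, |δ⁺(U)| ≥ (1/k)|δ(U)|. Then there exists a function f on the oriented edges with values in {1,...,k-1} satisfying flow conservation at every vertex (i.e., the orientation induces a nowhere-zero k-flow). -/
open Finset

section Hoffman
set_option linter.unusedSectionVars false
attribute [local instance 0] Classical.propDecidable

variable {V E : Type} [Fintype V] [DecidableEq V] [Fintype E]
variable (src tgt : E → V) (k : ℕ)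

private def exc (f : E → ℤ) (v : V) : ℤ :=
  (∑ e : E, if src e = v then f e else 0) - (∑ e : E, if tgt e = v then f e else 0)

private def Dm (f : E → ℤ) : ℕ := ∑ v : V, (exc src tgt f v).toNat

private def Stp (f : E → ℤ) (u v : V) : Prop :=
  ∃ e, (src e = u ∧ tgt e = v ∧ f e < (k : ℤ) - 1) ∨ (src e = v ∧ tgt e = u ∧ 1 < f e)

private def Bnd (f : E → ℤ) : Prop := ∀ e, 1 ≤ f e ∧ f e ≤ (k : ℤ) - 1

private lemma sum_delta (e₀ : E) (v : V) (c : ℤ) (h : E → V) :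
    (∑ e : E, if h e = v then (if e = e₀ then c else 0) else 0) =
      (if h e₀ = v then c else 0) := by
  have key : ∀ e : E, (if h e = v then (if e = e₀ then c else 0) else 0) =
      (if e = e₀ then (if h e₀ = v then c else 0) else 0) := by
    intro e
    by_cases he : e = e₀
    · subst he; simp
    · simp [he]
  rw [Finset.sum_congr rfl (fun e _ => key e)]
  simp

private lemma exc_push (f : E → ℤ) (e₀ : E) (c : ℤ) (v : V) :
    exc src tgt (fun e => f e + if e = e₀ then c else 0) v =
      exc src tgt f v + ((if src e₀ = v then c else 0) - (if tgt e₀ = v then c else 0)) := by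
  unfold exc
  have h1 : ∀ h : E → V, (∑ e : E, if h e = v then (f e + if e = e₀ then c else 0) else 0)
      = (∑ e : E, if h e = v then f e else 0) + (if h e₀ = v then c else 0) := by
    intro h
    rw [← sum_delta e₀ v c h, ← Finset.sum_add_distrib]
    refine Finset.sum_congr rfl ?_
    intro e _
    by_cases he : h e = v <;> simp [he]
  rw [h1, h1]; ring

private lemma sum_exc (f : E → ℤ) (S : Finset V) :
    ∑ v ∈ S, exc src tgt f v =
      ∑ e : E, ((if src e ∈ S then f e else 0) - (if tgt e ∈ S then f e else 0)) := by
  unfold exc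
  rw [Finset.sum_sub_distrib, Finset.sum_sub_distrib, Finset.sum_comm,
    Finset.sum_comm (s := S)]
  congr 1 <;>
  · refine Finset.sum_congr rfl ?_
    intro e _
    simp [Finset.sum_ite_eq]

private lemma chain_mono {r r' : V → V → Prop} :
    ∀ (l : List V) (a : V), List.Chain r a l →
      (∀ x ∈ a :: l, ∀ y ∈ a :: l, r x y → r' x y) → List.Chain r' a l := by
  intro l
  induction l with
  | nil => intro a _ _; exact List.Chain.nil
  | cons b l ih =>
    intro a hc H
    rw [List.Chain, List.chain_cons] at hc ⊢
    refine ⟨H a (by simp) b (by simp) hc.1, ih b hc.2 ?_⟩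
    intro x hx y hy hr
    exact H x (List.mem_cons_of_mem _ hx) y (List.mem_cons_of_mem _ hy) hr

private lemma dedup_chain {r : V → V → Prop} :
    ∀ (n : ℕ) (l : List V) (t : V), l.length ≤ n → List.Chain r t l →
      ∃ l' : List V, List.Chain r t l' ∧ l' ⊆ l ∧ (t :: l').Nodup ∧
        (t :: l').getLast? = (t :: l).getLast? := by
  intro n
  induction n with
  | zero =>
    intro l t hl _
    have hnil : l = [] := List.length_eq_zero_iff.mp (Nat.le_zero.mp hl)
    subst hnil
    exact ⟨[], List.Chain.nil, by simp, by simp, rfl⟩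
  | succ n ih =>
    intro l t hl hc
    by_cases ht : t ∈ l
    · obtain ⟨l₁, l₂, rfl⟩ := List.append_of_mem ht
      have hch' : List.Chain' r ((t :: l₁) ++ (t :: l₂)) := by
        show List.Chain' r (t :: (l₁ ++ t :: l₂))
        exact hc
      have hc2 : List.Chain r t l₂ :=
        hch'.suffix ⟨t :: l₁, rfl⟩
      have hlen : l₂.length ≤ n := by
        have := hl
        simp only [List.length_append, List.length_cons] at this
        omega
      obtain ⟨l', h1, h2, h3, h4⟩ := ih l₂ t hlen hc2
      refine ⟨l', h1, ?_, h3, ?_⟩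
      · intro x hx
        exact List.mem_append.mpr (Or.inr (List.mem_cons_of_mem _ (h2 hx)))
      · rw [h4]
        show (t :: l₂).getLast? = ((t :: l₁) ++ (t :: l₂)).getLast?
        rw [List.getLast?_append]
        rcases hx : (t :: l₂).getLast? with _ | x
        · rw [List.getLast?_eq_none_iff] at hx; simp at hx
        · rfl
    · cases l with
      | nil => exact ⟨[], List.Chain.nil, by simp, by simp, rfl⟩
      | cons v l'' =>
        rw [List.Chain, List.chain_cons] at hc
        have hlen : l''.length ≤ n := by
          simp only [List.length_cons] at hl; omega
        obtain ⟨l₂, h1, h2, h3, h4⟩ := ih l'' v hlen hc.2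
        have hsub : v :: l₂ ⊆ v :: l'' := by
          intro x hx
          rcases List.mem_cons.mp hx with h | h
          · simp [h]
          · exact List.mem_cons_of_mem _ (h2 h)
        refine ⟨v :: l₂, List.chain_cons.mpr ⟨hc.1, h1⟩, hsub, ?_, ?_⟩
        · refine List.nodup_cons.mpr ⟨fun hmem => ht (hsub hmem), h3⟩
        · rw [List.getLast?_cons_cons, h4, List.getLast?_cons_cons]


private lemma aug :
    ∀ (l : List V) (f : E → ℤ) (t s : V), Bnd k f → exc src tgt f t < 0 →
      List.Chain (Stp src tgt k f) t l →
      (t :: l).getLast? = some s → 0 < exc src tgt f s →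
      (t :: l).Nodup →
      ∃ f', Bnd k f' ∧ Dm src tgt f' < Dm src tgt f := by
  intro l
  induction l with
  | nil =>
    intro f t s _ hneg _ hs hpos _
    have : s = t := by simpa using hs.symm
    subst this
    omega
  | cons v l ih =>
    intro f t s hb hneg hch hs hpos hnd
    rw [List.Chain, List.chain_cons] at hch
    obtain ⟨⟨e₀, he₀⟩, hch'⟩ := hch
    have htvl : t ∉ v :: l := (List.nodup_cons.mp hnd).1
    have htv : t ≠ v := fun h => htvl (h ▸ List.mem_cons_self)
    obtain ⟨f', hb', hfe, hor, hexc⟩ :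
        ∃ f', Bnd k f' ∧ (∀ e, e ≠ e₀ → f' e = f e) ∧
          ((src e₀ = t ∧ tgt e₀ = v) ∨ (src e₀ = v ∧ tgt e₀ = t)) ∧
          (∀ w, exc src tgt f' w = exc src tgt f w +
            ((if t = w then 1 else 0) - (if v = w then 1 else 0))) := by
      rcases he₀ with ⟨h1, h2, h3⟩ | ⟨h1, h2, h3⟩
      · refine ⟨fun e => f e + if e = e₀ then 1 else 0, ?_, ?_, Or.inl ⟨h1, h2⟩, ?_⟩
        · intro e
          rcases hb e with ⟨ha, hc⟩
          by_cases he : e = e₀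
          · subst he; simp only [if_pos rfl]; omega
          · simp only [if_neg he, add_zero]; exact ⟨ha, hc⟩
        · intro e he; simp [he]
        · intro w
          rw [exc_push, h1, h2]
      · refine ⟨fun e => f e + if e = e₀ then -1 else 0, ?_, ?_, Or.inr ⟨h1, h2⟩, ?_⟩
        · intro e
          rcases hb e with ⟨ha, hc⟩
          by_cases he : e = e₀
          · subst he; simp only [if_pos rfl]; omega
          · simp only [if_neg he, add_zero]; exact ⟨ha, hc⟩
        · intro e he; simp [he]
        · intro w
          rw [exc_push, h1, h2]
          by_cases hw1 : t = w <;> by_cases hw2 : v = w <;>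
            simp [hw1, hw2]
    have het : exc src tgt f' t = exc src tgt f t + 1 := by
      rw [hexc t, if_pos rfl, if_neg (Ne.symm htv)]; ring
    have hev : exc src tgt f' v = exc src tgt f v - 1 := by
      rw [hexc v, if_neg htv, if_pos rfl]; ring
    have hew : ∀ w, w ≠ t → w ≠ v → exc src tgt f' w = exc src tgt f w := by
      intro w h1 h2
      rw [hexc w, if_neg (Ne.symm h1), if_neg (Ne.symm h2)]; ring
    by_cases hv : 0 < exc src tgt f v
    · refine ⟨f', hb', ?_⟩
      unfold Dm
      apply Finset.sum_lt_sum
      · intro w _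
        by_cases hw1 : w = t
        · subst hw1; rw [het]; omega
        by_cases hw2 : w = v
        · subst hw2; rw [hev]; omega
        · rw [hew w hw1 hw2]
      · exact ⟨v, Finset.mem_univ v, by rw [hev]; omega⟩
    · cases l with
      | nil =>
        have : s = v := by simpa using hs.symm
        subst this
        exact absurd hpos hv
      | cons w l' =>
        have hs' : (v :: w :: l').getLast? = some s := by
          rw [← hs]; simp
        have hsm : s ∈ w :: l' :=
          List.mem_of_getLast? (by rw [← hs']; simp)
        have hst : s ≠ t := fun h => htvl (h ▸ List.mem_cons_of_mem _ hsm)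
        have hsv : s ≠ v := by
          intro h
          have hvn : v ∉ w :: l' := (List.nodup_cons.mp (List.nodup_cons.mp hnd).2).1
          exact hvn (h ▸ hsm)
        have hchain' : List.Chain (Stp src tgt k f') v (w :: l') := by
          refine chain_mono _ _ hch' ?_
          intro x hx y hy hr
          obtain ⟨e, he⟩ := hr
          by_cases hee : e = e₀
          · subst hee
            exfalso
            apply htvl
            rcases he with ⟨a1, a2, _⟩ | ⟨a1, a2, _⟩ <;> rcases hor with ⟨b1, b2⟩ | ⟨b1, b2⟩
            · rw [← a1, b1] at hx; exact hx
            · rw [← a2, b2] at hy; exact hy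
            · rw [← a1, b1] at hy; exact hy
            · rw [← a2, b2] at hx; exact hx
          · exact ⟨e, by rw [hfe e hee]; exact he⟩
        have hpos' : 0 < exc src tgt f' s := by rw [hew s hst hsv]; exact hpos
        obtain ⟨f'', hb'', hlt⟩ :=
          ih f' v s hb' (by rw [hev]; omega) hchain' hs' hpos'
            (List.Nodup.of_cons hnd)
        refine ⟨f'', hb'', lt_of_lt_of_le hlt ?_⟩
        unfold Dm
        apply Finset.sum_le_sum
        intro u _
        by_cases hw1 : u = t
        · subst hw1; rw [het]; omega
        by_cases hw2 : u = v
        · subst hw2; rw [hev]; omega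
        · rw [hew u hw1 hw2]

private lemma improve (hk : 2 ≤ k)
    (hbal : ∀ U : Finset V, U.Nonempty → U ≠ Finset.univ →
      ((Finset.univ.filter (fun e => src e ∈ U ∧ tgt e ∉ U)).card : ℝ) ≥
        (1 / (k : ℝ)) *
          (((Finset.univ.filter (fun e => src e ∈ U ∧ tgt e ∉ U)).card : ℝ) +
            ((Finset.univ.filter (fun e => tgt e ∈ U ∧ src e ∉ U)).card : ℝ)))
    (f : E → ℤ) (hb : Bnd k f) (hD : Dm src tgt f ≠ 0) :
    ∃ f', Bnd k f' ∧ Dm src tgt f' < Dm src tgt f := by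
  classical
  have hS : ∃ s, 0 < exc src tgt f s := by
    by_contra h
    push_neg at h
    apply hD
    refine Finset.sum_eq_zero ?_
    intro v _
    have := h v
    omega
  obtain ⟨s, hs⟩ := hS
  by_cases hex : ∃ t, exc src tgt f t < 0 ∧ Relation.ReflTransGen (Stp src tgt k f) t s
  · obtain ⟨t, ht, hreach⟩ := hex
    obtain ⟨l0, hc0, hl0⟩ := List.exists_isChain_cons_of_relationReflTransGen hreach
    obtain ⟨l, hc, _, hnd, hlast⟩ :=
      dedup_chain (r := Stp src tgt k f) l0.length l0 t le_rfl hc0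
    refine aug src tgt k l f t s hb ht hc ?_ hs hnd
    rw [hlast, List.getLast?_eq_getLast (by simp), hl0]
  · push_neg at hex
    set R : Finset V :=
      Finset.univ.filter (fun u => Relation.ReflTransGen (Stp src tgt k f) u s) with hR
    have hmemR : ∀ u, u ∈ R ↔ Relation.ReflTransGen (Stp src tgt k f) u s := by
      intro u; simp [hR]
    have hnonneg : ∀ u ∈ R, 0 ≤ exc src tgt f u := by
      intro u hu
      by_contra h
      push_neg at h
      exact absurd ((hmemR u).mp hu) (by simpa using hex u h)
    have hsR : s ∈ R := (hmemR s).mpr Relation.ReflTransGen.refl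
    have hApos : 0 < ∑ v ∈ R, exc src tgt f v :=
      Finset.sum_pos' hnonneg ⟨s, hsR, hs⟩
    have hcut1 : ∀ e, src e ∈ R → tgt e ∉ R → f e = 1 := by
      intro e h1 h2
      rcases hb e with ⟨ha, _⟩
      by_contra hne
      have hgt : 1 < f e := lt_of_le_of_ne ha (Ne.symm hne)
      have : Stp src tgt k f (tgt e) (src e) := ⟨e, Or.inr ⟨rfl, rfl, hgt⟩⟩
      exact h2 ((hmemR _).mpr (Relation.ReflTransGen.head this ((hmemR _).mp h1)))
    have hcut2 : ∀ e, src e ∉ R → tgt e ∈ R → f e = (k : ℤ) - 1 := by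
      intro e h1 h2
      rcases hb e with ⟨_, hc⟩
      by_contra hne
      have hlt : f e < (k : ℤ) - 1 := lt_of_le_of_ne hc hne
      have : Stp src tgt k f (src e) (tgt e) := ⟨e, Or.inl ⟨rfl, rfl, hlt⟩⟩
      exact h1 ((hmemR _).mpr (Relation.ReflTransGen.head this ((hmemR _).mp h2)))
    have key : ∑ v ∈ R, exc src tgt f v =
        ((Finset.univ.filter (fun e => tgt e ∈ Rᶜ ∧ src e ∉ Rᶜ)).card : ℤ)
          - ((k : ℤ) - 1) *
            ((Finset.univ.filter (fun e => src e ∈ Rᶜ ∧ tgt e ∉ Rᶜ)).card : ℤ) := by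
      rw [sum_exc]
      have hterm : ∀ e : E,
          (if src e ∈ R then f e else 0) - (if tgt e ∈ R then f e else 0)
            = (if tgt e ∈ Rᶜ ∧ src e ∉ Rᶜ then (1 : ℤ) else 0)
              - (if src e ∈ Rᶜ ∧ tgt e ∉ Rᶜ then ((k : ℤ) - 1) else 0) := by
        intro e
        by_cases h1 : src e ∈ R <;> by_cases h2 : tgt e ∈ R <;>
          simp [h1, h2, Finset.mem_compl]
        · exact hcut1 e h1 h2
        · have := hcut2 e h1 h2; omega
      rw [Finset.sum_congr rfl (fun e _ => hterm e), Finset.sum_sub_distrib]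
      congr 1
      · rw [← Finset.sum_filter, Finset.sum_const, nsmul_eq_mul, mul_one]
      · rw [← Finset.sum_filter, Finset.sum_const, nsmul_eq_mul]
        ring
    have hUne : (Rᶜ : Finset V).Nonempty := by
      by_contra h
      rw [Finset.not_nonempty_iff_eq_empty, Finset.compl_eq_empty_iff] at h
      have : ∑ v ∈ R, exc src tgt f v = 0 := by
        rw [h, sum_exc]
        exact Finset.sum_eq_zero (fun e _ => by simp)
      omega
    have hUneq : (Rᶜ : Finset V) ≠ Finset.univ := by
      intro h
      have : s ∈ (Rᶜ : Finset V) := h ▸ Finset.mem_univ s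
      exact (Finset.mem_compl.mp this) hsR
    have hb2 := hbal Rᶜ hUne hUneq
    exfalso
    set P := (Finset.univ.filter (fun e => src e ∈ Rᶜ ∧ tgt e ∉ Rᶜ)).card with hP
    set Q := (Finset.univ.filter (fun e => tgt e ∈ Rᶜ ∧ src e ∉ Rᶜ)).card with hQ
    have hk0 : (0 : ℝ) < (k : ℝ) := by
      have : (0 : ℕ) < k := by omega
      exact_mod_cast this
    have hineq : (Q : ℝ) ≤ ((k : ℝ) - 1) * (P : ℝ) := by
      rw [ge_iff_le, one_div, inv_mul_le_iff₀ hk0] at hb2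
      nlinarith [hb2]
    have hineq' : (Q : ℤ) ≤ ((k : ℤ) - 1) * (P : ℤ) := by exact_mod_cast hineq
    rw [key] at hApos
    omega

private lemma descend (hk : 2 ≤ k)
    (hbal : ∀ U : Finset V, U.Nonempty → U ≠ Finset.univ →
      ((Finset.univ.filter (fun e => src e ∈ U ∧ tgt e ∉ U)).card : ℝ) ≥
        (1 / (k : ℝ)) *
          (((Finset.univ.filter (fun e => src e ∈ U ∧ tgt e ∉ U)).card : ℝ) +
            ((Finset.univ.filter (fun e => tgt e ∈ U ∧ src e ∉ U)).card : ℝ))) :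
    ∀ (n : ℕ) (f : E → ℤ), Bnd k f → Dm src tgt f ≤ n →
      ∃ f', Bnd k f' ∧ Dm src tgt f' = 0 := by
  intro n
  induction n with
  | zero => intro f hb hD; exact ⟨f, hb, Nat.le_zero.mp hD⟩
  | succ n ih =>
    intro f hb hD
    by_cases h : Dm src tgt f = 0
    · exact ⟨f, hb, h⟩
    · obtain ⟨f', hb', hlt⟩ := improve src tgt k hk hbal f hb h
      exact ih f' hb' (by omega)

end Hoffman

/-- A k-cut-balanced orientation induces a nowhere-zero k-flow:
if for every nonempty proper U, |δ⁺(U)| ≥ (1/k)|δ(U)|, then there is an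
integer flow with values in {1,...,k-1} conserved at every vertex. -/
theorem cut_balanced_induces_nwz_flow {V E : Type} [Fintype V] [DecidableEq V] [Fintype E]
    (src tgt : E → V) (k : ℕ) (hk : 2 ≤ k)
    (hbal : ∀ U : Finset V, U.Nonempty → U ≠ Finset.univ →
      ((Finset.univ.filter (fun e => src e ∈ U ∧ tgt e ∉ U)).card : ℝ) ≥
        (1 / (k : ℝ)) *
          (((Finset.univ.filter (fun e => src e ∈ U ∧ tgt e ∉ U)).card : ℝ) +
            ((Finset.univ.filter (fun e => tgt e ∈ U ∧ src e ∉ U)).card : ℝ))) :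
    ∃ f : E → ℤ, (∀ e, 1 ≤ f e ∧ f e ≤ (k : ℤ) - 1) ∧
      (∀ v : V,
        (∑ e : E, if src e = v then f e else 0) =
        (∑ e : E, if tgt e = v then f e else 0)) := by
  have hk' : (2 : ℤ) ≤ (k : ℤ) := by exact_mod_cast hk
  have hb0 : Bnd k (fun _ : E => (1 : ℤ)) := by
    intro e
    refine ⟨le_refl _, ?_⟩
    show (1 : ℤ) ≤ (k : ℤ) - 1
    omega
  obtain ⟨f, hb, hD⟩ := descend src tgt k hk hbal (Dm src tgt (fun _ => 1))
    (fun _ => 1) hb0 le_rfl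
  refine ⟨f, hb, ?_⟩
  have hsum : ∑ v : V, exc src tgt f v = 0 := by
    rw [sum_exc]
    exact Finset.sum_eq_zero (fun e _ => by simp)
  have hle : ∀ v ∈ (Finset.univ : Finset V), exc src tgt f v ≤ 0 := by
    intro v _
    have h0 : (exc src tgt f v).toNat = 0 := by
      have := (Finset.sum_eq_zero_iff (s := (Finset.univ : Finset V))
        (f := fun v => (exc src tgt f v).toNat)).mp hD v (Finset.mem_univ v)
      exact this
    omega
  have hzero := (Finset.sum_eq_zero_iff_of_nonpos hle).mp hsum
  intro v
  have h := hzero v (Finset.mem_univ v)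
  unfold exc at h
  omega
end

section
/- Let z* be an extreme point of the polytope P_k = { z ∈ ℝ_{≥0}^{E⁺∪E⁻} : flow conservation at every vertex, 1 ≤ z(e⁺)+z(e⁻) ≤ k−1 for every edge }. Then the set F of edges e for which z*(e⁺) or z*(e⁻) is non-integral contains no cycle (F is a forest). -/
open Finset

/-- Flow conservation for a bidirected assignment `z : E → Bool → ℝ`. -/
def FlowConserv {V E : Type} [Fintype V] [DecidableEq V] [Fintype E]
    (src tgt : E → V) (z : E → Bool → ℝ) : Prop :=
  ∀ v : V,
    (∑ e : E, ((if src e = v then z e true else 0) + (if tgt e = v then z e false else 0))) =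
    (∑ e : E, ((if tgt e = v then z e true else 0) + (if src e = v then z e false else 0)))

/-- Membership in the polytope P_k. -/
def FeasPk {V E : Type} [Fintype V] [DecidableEq V] [Fintype E]
    (src tgt : E → V) (k : ℕ) (z : E → Bool → ℝ) : Prop :=
  (∀ e b, 0 ≤ z e b) ∧ FlowConserv src tgt z ∧
  (∀ e, 1 ≤ z e true + z e false ∧ z e true + z e false ≤ (k : ℝ) - 1)

lemma frac_pos {x : ℝ} (h0 : 0 ≤ x) (hf : ¬ ∃ m : ℤ, x = (m : ℝ)) : 0 < x := by
  rcases lt_or_eq_of_le h0 with h | h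
  · exact h
  · exact absurd (⟨0, by simp [← h]⟩ : ∃ m : ℤ, x = (m : ℝ)) hf

lemma frac_add_int {a b : ℝ} (ha : ¬ ∃ m : ℤ, a = (m : ℝ)) (hb : ∃ m : ℤ, b = (m : ℝ)) :
    ¬ ∃ m : ℤ, a + b = (m : ℝ) := by
  rintro ⟨m, hm⟩
  obtain ⟨m', hm'⟩ := hb
  exact ha ⟨m - m', by push_cast; linarith⟩

lemma frac_strict {S : ℝ} {k : ℕ} (h1 : 1 ≤ S) (h2 : S ≤ (k : ℝ) - 1)
    (hf : ¬ ∃ m : ℤ, S = (m : ℝ)) : 1 < S ∧ S < (k : ℝ) - 1 := by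
  constructor
  · rcases lt_or_eq_of_le h1 with h | h
    · exact h
    · exact absurd (⟨1, by simp [← h]⟩ : ∃ m : ℤ, S = (m : ℝ)) hf
  · rcases lt_or_eq_of_le h2 with h | h
    · exact h
    · exact absurd (⟨(k : ℤ) - 1, by push_cast; linarith⟩ : ∃ m : ℤ, S = (m : ℝ)) hf

/-- At an extreme point z* of P_k, the set of edges with a
non-integral coordinate contains no (undirected) cycle, i.e., there is no
closed walk through distinct fractional edges. -/
theorem fractional_edges_acyclic {V E : Type} [Fintype V] [DecidableEq V] [Fintype E]
    (src tgt : E → V) (k : ℕ) (hk : 2 ≤ k)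
    (zs : E → Bool → ℝ) (hfeas : FeasPk src tgt k zs)
    (hext : ∀ z₁ z₂, FeasPk src tgt k z₁ → FeasPk src tgt k z₂ →
      (∀ e b, zs e b = (z₁ e b + z₂ e b) / 2) → z₁ = z₂) :
    ¬ ∃ (n : ℕ) (es : ZMod (n + 1) → E) (vs : ZMod (n + 1) → V),
        Function.Injective es ∧
        (∀ i, (¬ ∃ m : ℤ, zs (es i) true = (m : ℝ)) ∨
              (¬ ∃ m : ℤ, zs (es i) false = (m : ℝ))) ∧
        (∀ i, (src (es i) = vs i ∧ tgt (es i) = vs (i + 1)) ∨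
              (src (es i) = vs (i + 1) ∧ tgt (es i) = vs i)) := by
  classical
  rintro ⟨n, es, vs, hinj, hfrac, horient⟩
  obtain ⟨hnn, hflow, hsum⟩ := hfeas
  set P : E → Bool → Prop := fun e b => ¬ ∃ m : ℤ, zs e b = (m : ℝ) with hPdef
  have hpos : ∀ e b, P e b → 0 < zs e b := fun e b hb => frac_pos (hnn e b) hb
  -- per-edge direction
  set d : E → Bool → ℝ := fun e b =>
    if b then (if P e true then (if P e false then 1/2 else 1) else 0)
    else (if P e false then (if P e true then -(1/2) else -1) else 0) with hd
  have hdt : ∀ e, d e true = if P e true then (if P e false then (1:ℝ)/2 else 1) else 0 := by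
    intro e; simp only [hd]; norm_num
  have hdf : ∀ e, d e false = if P e false then (if P e true then -((1:ℝ)/2) else -1) else 0 := by
    intro e; simp only [hd]; norm_num
  -- orientation sign along the cycle
  set s : ZMod (n+1) → ℝ := fun i =>
    if src (es i) = vs i ∧ tgt (es i) = vs (i+1) then 1 else -1 with hs
  set σ : E → ℝ := fun e => ∑ i, if es i = e then s i else 0 with hσ
  have hσval : ∀ i, σ (es i) = s i := by
    intro i
    have h1 : ∀ j, (if es j = es i then s j else 0) = (if j = i then s j else 0) := by
      intro j; simp [hinj.eq_iff]
    simp only [hσ, h1]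
    simp
  have hsabs : ∀ i, |s i| = 1 := by
    intro i; simp only [hs]; split <;> simp
  have hσabs : ∀ e, |σ e| ≤ 1 := by
    intro e
    by_cases he : ∃ i, es i = e
    · obtain ⟨i, rfl⟩ := he; rw [hσval i, hsabs i]
    · push_neg at he
      have : σ e = 0 := Finset.sum_eq_zero (fun i _ => by simp [he i])
      rw [this]; norm_num
  have hdabs : ∀ e b, |d e b| ≤ 1 := by
    intro e b
    cases b
    · rw [hdf]; split_ifs <;> rw [abs_le] <;> norm_num
    · rw [hdt]; split_ifs <;> rw [abs_le] <;> norm_num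
  -- the margin function
  set S : E → ℝ := fun e => zs e true + zs e false with hS
  set m : E → ℝ := fun e =>
    if P e true then
      (if P e false then min (zs e true) (zs e false)
       else min (zs e true) (min (S e - 1) ((k:ℝ) - 1 - S e)))
    else if P e false then min (zs e false) (min (S e - 1) ((k:ℝ) - 1 - S e))
    else 1 with hm
  have hm_tt : ∀ e, P e true → P e false → m e = min (zs e true) (zs e false) := by
    intro e h1 h2; simp only [hm]; rw [if_pos h1, if_pos h2]
  have hm_tf : ∀ e, P e true → ¬ P e false →
      m e = min (zs e true) (min (S e - 1) ((k:ℝ) - 1 - S e)) := by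
    intro e h1 h2; simp only [hm]; rw [if_pos h1, if_neg h2]
  have hm_ft : ∀ e, ¬ P e true → P e false →
      m e = min (zs e false) (min (S e - 1) ((k:ℝ) - 1 - S e)) := by
    intro e h1 h2; simp only [hm]; rw [if_neg h1, if_pos h2]
  have hm_ff : ∀ e, ¬ P e true → ¬ P e false → m e = 1 := by
    intro e h1 h2; simp only [hm]; rw [if_neg h1, if_neg h2]
  have hSstrict : ∀ e, ¬ (P e true ↔ P e false) → 1 < S e ∧ S e < (k:ℝ) - 1 := by
    intro e hiff
    refine frac_strict (hsum e).1 (hsum e).2 ?_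
    by_cases h1 : P e true
    · have h2 : ¬ P e false := by tauto
      simp only [hPdef, not_not] at h2
      exact frac_add_int h1 h2
    · have h2 : P e false := by tauto
      simp only [hPdef, not_not] at h1
      intro hc
      refine frac_add_int h2 h1 ?_
      obtain ⟨mm, hmm⟩ := hc
      simp only [hS] at hmm
      exact ⟨mm, by linarith⟩
  have hmpos : ∀ e, 0 < m e := by
    intro e
    by_cases h1 : P e true <;> by_cases h2 : P e false
    · rw [hm_tt e h1 h2]; exact lt_min (hpos e true h1) (hpos e false h2)
    · have hst := hSstrict e (by tauto)
      rw [hm_tf e h1 h2]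
      exact lt_min (hpos e true h1) (lt_min (by linarith [hst.1]) (by linarith [hst.2]))
    · have hst := hSstrict e (by tauto)
      rw [hm_ft e h1 h2]
      exact lt_min (hpos e false h2) (lt_min (by linarith [hst.1]) (by linarith [hst.2]))
    · rw [hm_ff e h1 h2]; norm_num
  have hm_le : ∀ e b, P e b → m e ≤ zs e b := by
    intro e b hb
    cases b
    · by_cases h1 : P e true
      · rw [hm_tt e h1 hb]; exact min_le_right _ _
      · rw [hm_ft e h1 hb]; exact min_le_left _ _
    · by_cases h2 : P e false
      · rw [hm_tt e hb h2]; exact min_le_left _ _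
      · rw [hm_tf e hb h2]; exact min_le_left _ _
  have hm_leS : ∀ e, (d e true + d e false ≠ 0) → m e ≤ S e - 1 ∧ m e ≤ (k:ℝ) - 1 - S e := by
    intro e hne
    by_cases h1 : P e true <;> by_cases h2 : P e false
    · rw [hdt, hdf, if_pos h1, if_pos h2, if_pos h2, if_pos h1] at hne
      norm_num at hne
    · rw [hm_tf e h1 h2]
      exact ⟨(min_le_right _ _).trans (min_le_left _ _),
        (min_le_right _ _).trans (min_le_right _ _)⟩
    · rw [hm_ft e h1 h2]
      exact ⟨(min_le_right _ _).trans (min_le_left _ _),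
        (min_le_right _ _).trans (min_le_right _ _)⟩
    · rw [hdt, hdf, if_neg h1, if_neg h2] at hne
      norm_num at hne
  -- epsilon
  haveI : Nonempty E := ⟨es 0⟩
  set ε : ℝ := Finset.univ.inf' Finset.univ_nonempty m with hε
  have hεpos : 0 < ε := by
    rw [hε, Finset.lt_inf'_iff]
    exact fun e _ => hmpos e
  have hεle : ∀ e, ε ≤ m e := fun e => Finset.inf'_le m (Finset.mem_univ e)
  -- feasibility of the perturbed points
  have hfeas' : ∀ t : ℝ, |t| ≤ ε → FeasPk src tgt k (fun e b => zs e b + t * σ e * d e b) := by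
    intro t ht
    refine ⟨?_, ?_, ?_⟩
    · -- nonnegativity
      intro e b
      show 0 ≤ zs e b + t * σ e * d e b
      by_cases hde : d e b = 0
      · rw [hde, mul_zero]; simpa using hnn e b
      · have hPb : P e b := by
          by_contra hPb
          cases b
          · rw [hdf, if_neg (not_not_intro hPb)] at hde; exact hde rfl
          · rw [hdt, if_neg (not_not_intro hPb)] at hde; exact hde rfl
        have h1 : |t * σ e * d e b| ≤ ε := by
          rw [abs_mul, abs_mul]
          calc |t| * |σ e| * |d e b| ≤ ε * 1 * 1 :=
                mul_le_mul (mul_le_mul ht (hσabs e) (abs_nonneg _) (le_of_lt hεpos))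
                  (hdabs e b) (abs_nonneg _) (by positivity)
            _ = ε := by ring
        have h2 := (hεle e).trans (hm_le e b hPb)
        have h3 := neg_abs_le (t * σ e * d e b)
        linarith
    · -- flow conservation
      intro v
      show (∑ e : E, ((if src e = v then zs e true + t * σ e * d e true else 0) +
            (if tgt e = v then zs e false + t * σ e * d e false else 0))) =
          (∑ e : E, ((if tgt e = v then zs e true + t * σ e * d e true else 0) +
            (if src e = v then zs e false + t * σ e * d e false else 0)))
      have hsplitL : ∀ (f g : E → V),
          (∑ e : E, ((if f e = v then zs e true + t * σ e * d e true else 0) +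
            (if g e = v then zs e false + t * σ e * d e false else 0))) =
          (∑ e : E, ((if f e = v then zs e true else 0) + (if g e = v then zs e false else 0))) +
          (∑ e : E, ((if f e = v then t * σ e * d e true else 0) +
            (if g e = v then t * σ e * d e false else 0))) := by
        intro f g
        rw [← Finset.sum_add_distrib]
        refine Finset.sum_congr rfl (fun e _ => ?_)
        split_ifs <;> ring
      rw [hsplitL src tgt, hsplitL tgt src, hflow v]
      congr 1
      -- divergence of the perturbation vanishes
      rw [← sub_eq_zero, ← Finset.sum_sub_distrib]
      have heach : ∀ e : E,
          ((if src e = v then t * σ e * d e true else 0) +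
            (if tgt e = v then t * σ e * d e false else 0)) -
          ((if tgt e = v then t * σ e * d e true else 0) +
            (if src e = v then t * σ e * d e false else 0)) =
          ∑ i, (if es i = e then
            t * ((if src e = v then (1:ℝ) else 0) - (if tgt e = v then 1 else 0)) *
              s i * (d e true - d e false) else 0) := by
        intro e
        have h0 : ((if src e = v then t * σ e * d e true else 0) +
            (if tgt e = v then t * σ e * d e false else 0)) -
          ((if tgt e = v then t * σ e * d e true else 0) +
            (if src e = v then t * σ e * d e false else 0)) =
          t * ((if src e = v then (1:ℝ) else 0) - (if tgt e = v then 1 else 0)) *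
            σ e * (d e true - d e false) := by
          split_ifs <;> ring
        rw [h0, hσ]
        simp only [Finset.mul_sum, Finset.sum_mul]
        refine Finset.sum_congr rfl (fun i _ => ?_)
        split_ifs <;> ring
      rw [Finset.sum_congr rfl (fun e _ => heach e), Finset.sum_comm]
      -- evaluate the inner sums
      have hδ : ∀ i, d (es i) true - d (es i) false = 1 := by
        intro i
        rw [hdt, hdf]
        rcases hfrac i with h | h
        · by_cases h2 : P (es i) false
          · rw [if_pos h, if_pos h2, if_pos h2, if_pos h]; norm_num
          · rw [if_pos h, if_neg h2, if_neg h2]; norm_num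
        · by_cases h1 : P (es i) true
          · rw [if_pos h1, if_pos h, if_pos h, if_pos h1]; norm_num
          · rw [if_neg h1, if_pos h, if_neg h1]; norm_num
      have hgs : ∀ i, ((if src (es i) = v then (1:ℝ) else 0) -
            (if tgt (es i) = v then 1 else 0)) * s i =
          (if vs i = v then (1:ℝ) else 0) - (if vs (i+1) = v then 1 else 0) := by
        intro i
        by_cases hfw : src (es i) = vs i ∧ tgt (es i) = vs (i+1)
        · simp only [hs]
          rw [if_pos hfw, hfw.1, hfw.2, mul_one]
        · rcases horient i with h | h
          · exact absurd h hfw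
          · simp only [hs]
            rw [if_neg hfw, h.1, h.2]
            ring
      have hinner : ∀ i, (∑ e : E, (if es i = e then
            t * ((if src e = v then (1:ℝ) else 0) - (if tgt e = v then 1 else 0)) *
              s i * (d e true - d e false) else 0)) =
          t * ((if vs i = v then (1:ℝ) else 0) - (if vs (i+1) = v then 1 else 0)) := by
        intro i
        rw [Finset.sum_ite_eq Finset.univ (es i)
          (fun e => t * ((if src e = v then (1:ℝ) else 0) - (if tgt e = v then 1 else 0)) *
            s i * (d e true - d e false))]
        rw [if_pos (Finset.mem_univ _)]
        rw [hδ i, mul_one, mul_assoc, hgs i]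
      rw [Finset.sum_congr rfl (fun i _ => hinner i), ← Finset.mul_sum]
      have hre : (∑ i, ((if vs i = v then (1:ℝ) else 0) - (if vs (i+1) = v then 1 else 0))) = 0 := by
        rw [Finset.sum_sub_distrib]
        have : (∑ i, (if vs (i+1) = v then (1:ℝ) else 0)) =
            (∑ i, (if vs i = v then (1:ℝ) else 0)) :=
          Fintype.sum_equiv (Equiv.addRight (1 : ZMod (n+1)))
            (fun i => if vs (i+1) = v then (1:ℝ) else 0)
            (fun j => if vs j = v then (1:ℝ) else 0) (fun i => rfl)
        rw [this, sub_self]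
      rw [hre, mul_zero]
    · -- sum constraints
      intro e
      show 1 ≤ (zs e true + t * σ e * d e true) + (zs e false + t * σ e * d e false) ∧
        (zs e true + t * σ e * d e true) + (zs e false + t * σ e * d e false) ≤ (k:ℝ) - 1
      by_cases hde : d e true + d e false = 0
      · have hrw : zs e true + t * σ e * d e true + (zs e false + t * σ e * d e false)
            = zs e true + zs e false := by
          have : d e false = - d e true := by linarith
          rw [this]; ring
        rw [hrw]; exact hsum e
      · obtain ⟨hA, hB⟩ := hm_leS e hde
        have h1 := (hεle e).trans hA
        have h2 := (hεle e).trans hB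
        have hc1 : |d e true + d e false| ≤ 1 := by
          rw [hdt, hdf]; split_ifs <;> rw [abs_le] <;> norm_num
        have habs2 : |t * σ e * (d e true + d e false)| ≤ ε := by
          rw [abs_mul, abs_mul]
          calc |t| * |σ e| * |d e true + d e false| ≤ ε * 1 * 1 :=
                mul_le_mul (mul_le_mul ht (hσabs e) (abs_nonneg _) (le_of_lt hεpos))
                  hc1 (abs_nonneg _) (by positivity)
            _ = ε := by ring
        have hub := le_abs_self (t * σ e * (d e true + d e false))
        have hlb := neg_abs_le (t * σ e * (d e true + d e false))
        have hSe : S e = zs e true + zs e false := rfl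
        have hsplit : t * σ e * d e true + t * σ e * d e false
            = t * σ e * (d e true + d e false) := by ring
        constructor <;> linarith [(hsum e).1, (hsum e).2]
  -- derive the contradiction
  have h1 := hfeas' ε (le_of_eq (abs_of_pos hεpos))
  have h2 := hfeas' (-ε) (le_of_eq (by rw [abs_neg, abs_of_pos hεpos]))
  have heq := hext _ _ h1 h2 (fun e b => by ring)
  have hbval : ∃ b, d (es 0) b ≠ 0 := by
    rcases hfrac 0 with h | h
    · refine ⟨true, ?_⟩
      rw [hdt, if_pos h]
      split_ifs <;> norm_num
    · refine ⟨false, ?_⟩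
      rw [hdf, if_pos h]
      split_ifs <;> norm_num
  obtain ⟨b, hdb⟩ := hbval
  have hcoord : zs (es 0) b + ε * σ (es 0) * d (es 0) b
      = zs (es 0) b + -ε * σ (es 0) * d (es 0) b := congrFun (congrFun heq (es 0)) b
  have hs0 : σ (es 0) ≠ 0 := by
    rw [hσval 0]
    intro hc
    have habs := hsabs 0
    rw [hc] at habs
    norm_num at habs
  have h0 : ε * (σ (es 0) * d (es 0) b) = 0 := by linear_combination hcoord / 2
  rcases mul_eq_zero.mp h0 with h | h
  · exact absurd h (ne_of_gt hεpos)
  · rcases mul_eq_zero.mp h with h' | h'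
    · exact hs0 h'
    · exact hdb h'
end

section
/- The projection of the polytope { (y,z) : flow conservation on z at every vertex, y(e⁺)+y(e⁻)=1 for every edge, y ≤ z ≤ (k−1)y, y ≥ 0 } onto the z-coordinates equals the polytope { z ≥ 0 : flow conservation at every vertex, 1 ≤ z(e⁺)+z(e⁻) ≤ k−1 for every edge }. -/
open Finset

/-- The projection onto the z-coordinates of the polytope
{ (y,z) : flow conservation on z, y(e⁺)+y(e⁻)=1, y ≤ z ≤ (k−1)y, y ≥ 0 }
equals { z ≥ 0 : flow conservation, 1 ≤ z(e⁺)+z(e⁻) ≤ k−1 }. -/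
theorem projection_onto_z {V E : Type} [Fintype V] [DecidableEq V] [Fintype E]
    (src tgt : E → V) (k : ℕ) (hk : 2 ≤ k) :
    ∀ z : E → Bool → ℝ,
      (∃ y : E → Bool → ℝ,
        (∀ e b, 0 ≤ y e b) ∧
        (∀ e, y e true + y e false = 1) ∧
        (∀ e b, y e b ≤ z e b ∧ z e b ≤ ((k : ℝ) - 1) * y e b) ∧
        FlowConserv src tgt z)
      ↔ ((∀ e b, 0 ≤ z e b) ∧ FlowConserv src tgt z ∧
          (∀ e, 1 ≤ z e true + z e false ∧ z e true + z e false ≤ (k : ℝ) - 1)) := by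
  intro z
  constructor
  · rintro ⟨y, hy0, hy1, hyz, hfc⟩
    refine ⟨fun e b => le_trans (hy0 e b) (hyz e b).1, hfc, fun e => ?_⟩
    constructor
    · calc (1:ℝ) = y e true + y e false := (hy1 e).symm
        _ ≤ z e true + z e false := add_le_add (hyz e true).1 (hyz e false).1
    · calc z e true + z e false ≤ ((k:ℝ)-1) * y e true + ((k:ℝ)-1) * y e false :=
            add_le_add (hyz e true).2 (hyz e false).2
        _ = ((k:ℝ)-1) * (y e true + y e false) := by ring
        _ = (k:ℝ)-1 := by rw [hy1 e]; ring
  · rintro ⟨hz0, hfc, hs⟩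
    refine ⟨fun e b => z e b / (z e true + z e false), ?_, ?_, ?_, hfc⟩
    · intro e b
      exact div_nonneg (hz0 e b) (le_trans zero_le_one (hs e).1)
    · intro e
      have h1 : (0:ℝ) < z e true + z e false := lt_of_lt_of_le one_pos (hs e).1
      field_simp
    · intro e b
      have h1 : (1:ℝ) ≤ z e true + z e false := (hs e).1
      have h0 : (0:ℝ) < z e true + z e false := lt_of_lt_of_le one_pos h1
      constructor
      · rw [div_le_iff₀ h0]
        nlinarith [hz0 e b]
      · show z e b ≤ ((k:ℝ)-1) * (z e b / (z e true + z e false))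
        rw [← mul_div_assoc, le_div_iff₀ h0]
        nlinarith [hz0 e b, (hs e).2]
end

section
/- Let y ∈ ℝ^{E⁺∪E⁻} satisfy y(e⁺)+y(e⁻)=1 for every edge e, y ≥ 0, and suppose there exists z with flow conservation and y ≤ z ≤ (k−1)y. Then for every subset U of vertices, y(δ⁺(U)) ≤ ((k−1)/k)·|δ_E(U)|. -/
open Finset

/-- If y ≥ 0 with y(e⁺)+y(e⁻)=1 for every edge, and there exists a
circulation z with y ≤ z ≤ (k−1)y, then for every U ⊆ V,
y(δ⁺(U)) ≤ ((k−1)/k)·|δ_E(U)|. -/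
theorem fractional_orientation_cut_bound {V E : Type} [Fintype V] [DecidableEq V] [Fintype E]
    (src tgt : E → V) (k : ℕ) (hk : 2 ≤ k)
    (y : E → Bool → ℝ) (hy0 : ∀ e b, 0 ≤ y e b)
    (hy1 : ∀ e, y e true + y e false = 1)
    (hz : ∃ z : E → Bool → ℝ, FlowConserv src tgt z ∧
      ∀ e b, y e b ≤ z e b ∧ z e b ≤ ((k : ℝ) - 1) * y e b) :
    ∀ U : Finset V,
      (∑ e : E, ((if src e ∈ U ∧ tgt e ∉ U then y e true else 0) +
                 (if tgt e ∈ U ∧ src e ∉ U then y e false else 0))) ≤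
        (((k : ℝ) - 1) / (k : ℝ)) *
          ((Finset.univ.filter (fun e =>
            (src e ∈ U ∧ tgt e ∉ U) ∨ (tgt e ∈ U ∧ src e ∉ U))).card : ℝ) := by
  classical
  obtain ⟨z, hzc, hzb⟩ := hz
  intro U
  set A := ∑ e : E, ((if src e ∈ U ∧ tgt e ∉ U then y e true else 0) +
                 (if tgt e ∈ U ∧ src e ∉ U then y e false else 0)) with hA
  set B := ∑ e : E, ((if tgt e ∈ U ∧ src e ∉ U then y e true else 0) +
                 (if src e ∈ U ∧ tgt e ∉ U then y e false else 0)) with hB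
  set zA := ∑ e : E, ((if src e ∈ U ∧ tgt e ∉ U then z e true else 0) +
                 (if tgt e ∈ U ∧ src e ∉ U then z e false else 0)) with hzA
  set zB := ∑ e : E, ((if tgt e ∈ U ∧ src e ∉ U then z e true else 0) +
                 (if src e ∈ U ∧ tgt e ∉ U then z e false else 0)) with hzB
  set D := ((Finset.univ.filter (fun e =>
            (src e ∈ U ∧ tgt e ∉ U) ∨ (tgt e ∈ U ∧ src e ∉ U))).card : ℝ) with hD
  have h1 : ∀ e : E, (∑ v ∈ U, ((if src e = v then z e true else 0) +
      (if tgt e = v then z e false else 0)))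
      = (if src e ∈ U then z e true else 0) + (if tgt e ∈ U then z e false else 0) := by
    intro e
    rw [Finset.sum_add_distrib, Finset.sum_ite_eq U (src e), Finset.sum_ite_eq U (tgt e)]
  have h2 : ∀ e : E, (∑ v ∈ U, ((if tgt e = v then z e true else 0) +
      (if src e = v then z e false else 0)))
      = (if tgt e ∈ U then z e true else 0) + (if src e ∈ U then z e false else 0) := by
    intro e
    rw [Finset.sum_add_distrib, Finset.sum_ite_eq U (tgt e), Finset.sum_ite_eq U (src e)]
  have hsum : (∑ e : E, ((if src e ∈ U then z e true else 0) +
      (if tgt e ∈ U then z e false else 0)))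
      = ∑ e : E, ((if tgt e ∈ U then z e true else 0) + (if src e ∈ U then z e false else 0)) := by
    calc (∑ e : E, ((if src e ∈ U then z e true else 0) + (if tgt e ∈ U then z e false else 0)))
        = ∑ e : E, ∑ v ∈ U, ((if src e = v then z e true else 0) +
            (if tgt e = v then z e false else 0)) :=
          Finset.sum_congr rfl (fun e _ => (h1 e).symm)
      _ = ∑ v ∈ U, ∑ e : E, ((if src e = v then z e true else 0) +
            (if tgt e = v then z e false else 0)) := Finset.sum_comm
      _ = ∑ v ∈ U, ∑ e : E, ((if tgt e = v then z e true else 0) +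
            (if src e = v then z e false else 0)) :=
          Finset.sum_congr rfl (fun v _ => hzc v)
      _ = ∑ e : E, ∑ v ∈ U, ((if tgt e = v then z e true else 0) +
            (if src e = v then z e false else 0)) := Finset.sum_comm
      _ = _ := Finset.sum_congr rfl (fun e _ => h2 e)
  have hzAB : zA = zB := by
    have key : ∀ e ∈ (Finset.univ : Finset E),
      (((if src e ∈ U then z e true else 0) + (if tgt e ∈ U then z e false else 0)) +
      ((if tgt e ∈ U ∧ src e ∉ U then z e true else 0) +
        (if src e ∈ U ∧ tgt e ∉ U then z e false else 0)))
      = (((if tgt e ∈ U then z e true else 0) + (if src e ∈ U then z e false else 0)) +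
      ((if src e ∈ U ∧ tgt e ∉ U then z e true else 0) +
        (if tgt e ∈ U ∧ src e ∉ U then z e false else 0))) := by
      intro e _
      by_cases hs : src e ∈ U <;> by_cases ht : tgt e ∈ U <;> simp [hs, ht] <;> ring
    have hc := Finset.sum_congr rfl key
    have hsum' := hsum
    have hzA' := hzA
    have hzB' := hzB
    simp only [Finset.sum_add_distrib] at hc hsum' hzA' hzB'
    rw [hzA', hzB']
    linarith
  have hAzA : A ≤ zA := by
    apply Finset.sum_le_sum
    intro e _
    apply add_le_add
    · split_ifs with h
      · exact (hzb e true).1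
      · exact le_refl 0
    · split_ifs with h
      · exact (hzb e false).1
      · exact le_refl 0
  have hzBB : zB ≤ ((k : ℝ) - 1) * B := by
    rw [hB, Finset.mul_sum]
    apply Finset.sum_le_sum
    intro e _
    rw [mul_add]
    have ht1 : (if tgt e ∈ U ∧ src e ∉ U then z e true else 0) ≤
        ((k : ℝ) - 1) * (if tgt e ∈ U ∧ src e ∉ U then y e true else 0) := by
      split_ifs with h
      · exact (hzb e true).2
      · simp
    have ht2 : (if src e ∈ U ∧ tgt e ∉ U then z e false else 0) ≤
        ((k : ℝ) - 1) * (if src e ∈ U ∧ tgt e ∉ U then y e false else 0) := by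
      split_ifs with h
      · exact (hzb e false).2
      · simp
    linarith
  have hABD : A + B = D := by
    rw [hA, hB, hD, ← Finset.sum_add_distrib, ← Finset.sum_boole]
    apply Finset.sum_congr rfl
    intro e _
    by_cases hs : src e ∈ U <;> by_cases ht : tgt e ∈ U <;>
      simp [hs, ht] <;> linarith [hy1 e]
  have hk0 : (0 : ℝ) < (k : ℝ) := by
    have : (2 : ℝ) ≤ (k : ℝ) := by exact_mod_cast hk
    linarith
  rw [div_mul_eq_mul_div, le_div_iff₀ hk0]
  have hexp : A * (k : ℝ) = A + ((k : ℝ) - 1) * A := by ring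
  have hBD : ((k : ℝ) - 1) * B = ((k : ℝ) - 1) * D - ((k : ℝ) - 1) * A := by
    rw [← hABD]; ring
  linarith
end

section
/- Let G=(V,E) be an undirected graph and E₁ ⊆ E a subset of edges with a fixed orientation Ē₁. Then Ē₁ can be extended to an orientation F̄ of some superset F ⊇ E₁ of edges that is partially k-cut-balanced (i.e., |δ⁺_{F̄}(U)| ≤ ((k−1)/k)|δ_F(U)| for all U ⊆ V) if and only if |δ⁺_{Ē₁}(U)| ≤ ((k−1)/k)|δ_E(U)| for every U ⊆ V. -/
open Finset

set_option linter.unusedSectionVars false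
set_option maxHeartbeats 4000000

section CutBalanced
variable {V E : Type} [Fintype V] [DecidableEq V] [Fintype E] [DecidableEq E]
  (src tgt : E → V)

private def inS (f : E → ℤ) (U : Finset V) : ℤ :=
  ∑ e ∈ univ.filter (fun e => tgt e ∈ U ∧ src e ∉ U), f e

private def outS (f : E → ℤ) (U : Finset V) : ℤ :=
  ∑ e ∈ univ.filter (fun e => src e ∈ U ∧ tgt e ∉ U), f e

private lemma beta_identity (l u : E → ℤ) (U₁ U₂ : Finset V) :
    (outS src tgt u (U₁ ∩ U₂) - inS src tgt l (U₁ ∩ U₂))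
      + (outS src tgt u (U₁ ∪ U₂) - inS src tgt l (U₁ ∪ U₂))
      + ∑ e ∈ univ.filter (fun e =>
          (src e ∈ U₂ ∧ src e ∉ U₁ ∧ tgt e ∈ U₁ ∧ tgt e ∉ U₂) ∨
          (src e ∈ U₁ ∧ src e ∉ U₂ ∧ tgt e ∈ U₂ ∧ tgt e ∉ U₁)), (u e - l e)
      = (outS src tgt u U₁ - inS src tgt l U₁)
        + (outS src tgt u U₂ - inS src tgt l U₂) := by
  simp only [outS, inS, sum_filter, ← sum_sub_distrib, ← sum_add_distrib]
  refine sum_congr rfl fun e _ => ?_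
  by_cases h1 : src e ∈ U₁ <;> by_cases h2 : src e ∈ U₂ <;>
    by_cases h3 : tgt e ∈ U₁ <;> by_cases h4 : tgt e ∈ U₂ <;>
    simp [h1, h2, h3, h4] <;> ring

private lemma sum_filter_update (p : E → Prop) [DecidablePred p] (f : E → ℤ) (e₀ : E) (x : ℤ) :
    ∑ e ∈ univ.filter p, Function.update f e₀ x e
      = (∑ e ∈ univ.filter p, f e) + (if p e₀ then x - f e₀ else 0) := by
  have key : ∀ e ∈ univ, (if p e then Function.update f e₀ x e else 0)
      = (if p e then f e else 0) + (if e = e₀ then (if p e₀ then x - f e₀ else 0) else 0) := by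
    intro e _
    by_cases he : e = e₀
    · subst he; by_cases hp : p e <;> simp [hp, Function.update_self]
    · by_cases hp : p e <;> simp [hp, he, Function.update_of_ne he]
  simp only [sum_filter, sum_congr rfl key, sum_add_distrib]
  rw [Finset.sum_ite_eq' univ e₀ (fun _ => if p e₀ then x - f e₀ else 0)]
  simp

private lemma inS_update (f : E → ℤ) (e₀ : E) (x : ℤ) (U : Finset V) :
    inS src tgt (Function.update f e₀ x) U
      = inS src tgt f U + (if tgt e₀ ∈ U ∧ src e₀ ∉ U then x - f e₀ else 0) :=
  sum_filter_update _ f e₀ x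

private lemma outS_update (f : E → ℤ) (e₀ : E) (x : ℤ) (U : Finset V) :
    outS src tgt (Function.update f e₀ x) U
      = outS src tgt f U + (if src e₀ ∈ U ∧ tgt e₀ ∉ U then x - f e₀ else 0) :=
  sum_filter_update _ f e₀ x

private lemma base_conserv (l u : E → ℤ) (hlu : ∀ e, l e ≤ u e) (hul : ∀ e, u e ≤ l e)
    (hcond : ∀ U : Finset V, inS src tgt l U ≤ outS src tgt u U) (v : V) :
    ∑ e ∈ univ.filter (fun e => tgt e = v), l e
      = ∑ e ∈ univ.filter (fun e => src e = v), l e := by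
  have hul' : u = l := funext fun e => le_antisymm (hul e) (hlu e)
  subst hul'
  have h1 := hcond {v}
  have h2 := hcond ({v}ᶜ)
  have e1 : inS src tgt u ({v}ᶜ) = outS src tgt u {v} := by
    unfold inS outS
    refine sum_congr (filter_congr fun e _ => ?_) fun _ _ => rfl
    simp [Finset.mem_compl, and_comm]
  have e2 : outS src tgt u ({v}ᶜ) = inS src tgt u {v} := by
    unfold inS outS
    refine sum_congr (filter_congr fun e _ => ?_) fun _ _ => rfl
    simp [Finset.mem_compl, and_comm]
  rw [e1, e2] at h2
  have h3 : inS src tgt u {v} + ∑ e ∈ univ.filter (fun e => tgt e = v ∧ src e = v), u e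
      = ∑ e ∈ univ.filter (fun e => tgt e = v), u e := by
    simp only [inS, sum_filter, ← sum_add_distrib]
    refine sum_congr rfl fun e _ => ?_
    by_cases hs : src e = v <;> by_cases ht : tgt e = v <;> simp [hs, ht]
  have h4 : outS src tgt u {v} + ∑ e ∈ univ.filter (fun e => tgt e = v ∧ src e = v), u e
      = ∑ e ∈ univ.filter (fun e => src e = v), u e := by
    simp only [outS, sum_filter, ← sum_add_distrib]
    refine sum_congr rfl fun e _ => ?_
    by_cases hs : src e = v <;> by_cases ht : tgt e = v <;> simp [hs, ht]
  omega

private lemma hoffman : ∀ (n : ℕ) (l u : E → ℤ), (∑ e, (u e - l e).toNat) = n →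
    (∀ e, l e ≤ u e) → (∀ U : Finset V, inS src tgt l U ≤ outS src tgt u U) →
    ∃ g : E → ℤ, (∀ e, l e ≤ g e) ∧ (∀ e, g e ≤ u e) ∧
      ∀ v : V, ∑ e ∈ univ.filter (fun e => tgt e = v), g e
        = ∑ e ∈ univ.filter (fun e => src e = v), g e := by
  intro n
  induction n using Nat.strong_induction_on with
  | _ n ih =>
  intro l u hn hlu hcond
  by_cases hall : ∀ e, u e ≤ l e
  · exact ⟨l, fun _ => le_rfl, hlu, base_conserv src tgt l u hlu hall hcond⟩
  push_neg at hall
  obtain ⟨e₀, he₀⟩ := hall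
  by_cases hc1 : ∀ U : Finset V,
      inS src tgt (Function.update l e₀ (l e₀ + 1)) U ≤ outS src tgt u U
  · have hm : (∑ e, (u e - Function.update l e₀ (l e₀ + 1) e).toNat) < n := by
      rw [← hn]
      apply Finset.sum_lt_sum
      · intro i _
        by_cases hi : i = e₀
        · subst hi; simp only [Function.update_self]; omega
        · simp [Function.update_of_ne hi]
      · exact ⟨e₀, mem_univ _, by simp only [Function.update_self]; omega⟩
    obtain ⟨g, hg1, hg2, hg3⟩ := ih _ hm _ u rfl
      (fun e => by
        by_cases he : e = e₀
        · subst he; simp only [Function.update_self]; omega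
        · simp only [Function.update_of_ne he]; exact hlu e) hc1
    refine ⟨g, fun e => le_trans ?_ (hg1 e), hg2, hg3⟩
    by_cases he : e = e₀
    · subst he; simp only [Function.update_self]; omega
    · simp [Function.update_of_ne he]
  by_cases hc2 : ∀ U : Finset V,
      inS src tgt l U ≤ outS src tgt (Function.update u e₀ (u e₀ - 1)) U
  · have hm : (∑ e, (Function.update u e₀ (u e₀ - 1) e - l e).toNat) < n := by
      rw [← hn]
      apply Finset.sum_lt_sum
      · intro i _
        by_cases hi : i = e₀
        · subst hi; simp only [Function.update_self]; omega
        · simp [Function.update_of_ne hi]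
      · exact ⟨e₀, mem_univ _, by simp only [Function.update_self]; omega⟩
    obtain ⟨g, hg1, hg2, hg3⟩ := ih _ hm l _ rfl
      (fun e => by
        by_cases he : e = e₀
        · subst he; simp only [Function.update_self]; omega
        · simp only [Function.update_of_ne he]; exact hlu e) hc2
    refine ⟨g, hg1, fun e => le_trans (hg2 e) ?_, hg3⟩
    by_cases he : e = e₀
    · subst he; simp only [Function.update_self]; omega
    · simp [Function.update_of_ne he]
  exfalso
  push_neg at hc1 hc2
  obtain ⟨U₁, hU₁⟩ := hc1
  obtain ⟨U₂, hU₂⟩ := hc2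
  rw [inS_update] at hU₁
  rw [outS_update] at hU₂
  have hcU₁ := hcond U₁
  have hcU₂ := hcond U₂
  have h₁ : (tgt e₀ ∈ U₁ ∧ src e₀ ∉ U₁) ∧ outS src tgt u U₁ = inS src tgt l U₁ := by
    by_cases hb : tgt e₀ ∈ U₁ ∧ src e₀ ∉ U₁
    · rw [if_pos hb] at hU₁; exact ⟨hb, by omega⟩
    · rw [if_neg hb] at hU₁; omega
  have h₂ : (src e₀ ∈ U₂ ∧ tgt e₀ ∉ U₂) ∧ outS src tgt u U₂ = inS src tgt l U₂ := by
    by_cases hb : src e₀ ∈ U₂ ∧ tgt e₀ ∉ U₂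
    · rw [if_pos hb] at hU₂; exact ⟨hb, by omega⟩
    · rw [if_neg hb] at hU₂; omega
  have hid := beta_identity src tgt l u U₁ U₂
  have he₀X : e₀ ∈ univ.filter (fun e =>
      (src e ∈ U₂ ∧ src e ∉ U₁ ∧ tgt e ∈ U₁ ∧ tgt e ∉ U₂) ∨
      (src e ∈ U₁ ∧ src e ∉ U₂ ∧ tgt e ∈ U₂ ∧ tgt e ∉ U₁)) := by
    simp only [mem_filter, mem_univ, true_and]
    exact Or.inl ⟨h₂.1.1, h₁.1.2, h₁.1.1, h₂.1.2⟩
  have hX : (1:ℤ) ≤ ∑ e ∈ univ.filter (fun e =>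
      (src e ∈ U₂ ∧ src e ∉ U₁ ∧ tgt e ∈ U₁ ∧ tgt e ∉ U₂) ∨
      (src e ∈ U₁ ∧ src e ∉ U₂ ∧ tgt e ∈ U₂ ∧ tgt e ∉ U₁)), (u e - l e) := by
    have h : u e₀ - l e₀ ≤ ∑ e ∈ univ.filter (fun e =>
        (src e ∈ U₂ ∧ src e ∉ U₁ ∧ tgt e ∈ U₁ ∧ tgt e ∉ U₂) ∨
        (src e ∈ U₁ ∧ src e ∉ U₂ ∧ tgt e ∈ U₂ ∧ tgt e ∉ U₁)), (u e - l e) :=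
      Finset.single_le_sum (fun i _ => sub_nonneg.2 (hlu i)) he₀X
    omega
  have hA := hcond (U₁ ∩ U₂)
  have hB := hcond (U₁ ∪ U₂)
  omega

private lemma sum_fiber (g : E → ℤ) (h : E → V) (U : Finset V) :
    ∑ e ∈ univ.filter (fun e => h e ∈ U), g e
      = ∑ v ∈ U, ∑ e ∈ univ.filter (fun e => h e = v), g e := by
  simp only [sum_filter]
  rw [Finset.sum_comm]
  refine sum_congr rfl fun e _ => ?_
  rw [Finset.sum_ite_eq U (h e) (fun _ => g e)]

private lemma cut_eq (g : E → ℤ)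
    (hg : ∀ v : V, ∑ e ∈ univ.filter (fun e => tgt e = v), g e
        = ∑ e ∈ univ.filter (fun e => src e = v), g e)
    (U : Finset V) : inS src tgt g U = outS src tgt g U := by
  have h1 : ∑ e ∈ univ.filter (fun e => tgt e ∈ U), g e
      = ∑ e ∈ univ.filter (fun e => src e ∈ U), g e := by
    rw [sum_fiber, sum_fiber]
    exact sum_congr rfl fun v _ => hg v
  have h2 : inS src tgt g U + ∑ e ∈ univ.filter (fun e => src e ∈ U ∧ tgt e ∈ U), g e
      = ∑ e ∈ univ.filter (fun e => tgt e ∈ U), g e := by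
    simp only [inS, sum_filter, ← sum_add_distrib]
    refine sum_congr rfl fun e _ => ?_
    by_cases hs : src e ∈ U <;> by_cases ht : tgt e ∈ U <;> simp [hs, ht]
  have h3 : outS src tgt g U + ∑ e ∈ univ.filter (fun e => src e ∈ U ∧ tgt e ∈ U), g e
      = ∑ e ∈ univ.filter (fun e => src e ∈ U), g e := by
    simp only [outS, sum_filter, ← sum_add_distrib]
    refine sum_congr rfl fun e _ => ?_
    by_cases hs : src e ∈ U <;> by_cases ht : tgt e ∈ U <;> simp [hs, ht]
  omega

private lemma card_filter_int (s : Finset E) (p : E → Prop) [DecidablePred p] :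
    ((s.filter p).card : ℤ) = ∑ e ∈ univ, (if e ∈ s ∧ p e then (1:ℤ) else 0) := by
  have h : s.filter p = univ.filter (fun e => e ∈ s ∧ p e) := by ext e; simp
  rw [h, Finset.card_filter]
  push_cast
  rfl

private def lb (E₁ : Finset E) (o₁ : E → Bool) (k : ℕ) : E → ℤ := fun e =>
  if e ∈ E₁ then (if o₁ e then 1 else 1 - (k:ℤ)) else 1 - (k:ℤ)

private def ub (E₁ : Finset E) (o₁ : E → Bool) (k : ℕ) : E → ℤ := fun e =>
  if e ∈ E₁ then (if o₁ e then (k:ℤ) - 1 else -1) else (k:ℤ) - 1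

private lemma hoffman_cond_identity (E₁ : Finset E) (o₁ : E → Bool) (k : ℕ) (U : Finset V) :
    outS src tgt (ub E₁ o₁ k) U - inS src tgt (lb E₁ o₁ k) U
      = ((k:ℤ) - 1) * ((univ.filter (fun e =>
            (src e ∈ Uᶜ ∧ tgt e ∉ Uᶜ) ∨ (tgt e ∈ Uᶜ ∧ src e ∉ Uᶜ))).card : ℤ)
        - (k:ℤ) * ((E₁.filter (fun e =>
            (o₁ e = true ∧ src e ∈ Uᶜ ∧ tgt e ∉ Uᶜ) ∨
            (o₁ e = false ∧ tgt e ∈ Uᶜ ∧ src e ∉ Uᶜ))).card : ℤ) := by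
  rw [card_filter_int, card_filter_int]
  simp only [outS, inS, sum_filter, Finset.mul_sum, ← sum_sub_distrib]
  refine sum_congr rfl fun e _ => ?_
  by_cases hE : e ∈ E₁ <;> cases ho : o₁ e <;>
    by_cases hs : src e ∈ U <;> by_cases ht : tgt e ∈ U <;>
    simp [lb, ub, hE, ho, hs, ht, Finset.mem_compl] <;> ring

end CutBalanced


/-- A fixed orientation o₁ of a subset E₁ of edges extends to a
partial k-cut-balanced orientation (on some superset F of edges) if and only if
|δ⁺_{Ē₁}(U)| ≤ ((k−1)/k)|δ_E(U)| for every U ⊆ V.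
Orientations are encoded by `o : E → Bool` (`true` = reference direction src → tgt). -/
theorem extends_to_partial_cut_balanced_iff {V E : Type}
    [Fintype V] [DecidableEq V] [Fintype E] [DecidableEq E]
    (src tgt : E → V) (k : ℕ) (hk : 2 ≤ k) (E₁ : Finset E) (o₁ : E → Bool) :
    (∃ (F : Finset E) (o : E → Bool), E₁ ⊆ F ∧ (∀ e ∈ E₁, o e = o₁ e) ∧
      ∀ U : Finset V,
        ((F.filter (fun e => (o e = true ∧ src e ∈ U ∧ tgt e ∉ U) ∨
            (o e = false ∧ tgt e ∈ U ∧ src e ∉ U))).card : ℝ) ≤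
          (((k : ℝ) - 1) / (k : ℝ)) *
            ((F.filter (fun e =>
              (src e ∈ U ∧ tgt e ∉ U) ∨ (tgt e ∈ U ∧ src e ∉ U))).card : ℝ))
    ↔ (∀ U : Finset V,
        ((E₁.filter (fun e => (o₁ e = true ∧ src e ∈ U ∧ tgt e ∉ U) ∨
            (o₁ e = false ∧ tgt e ∈ U ∧ src e ∉ U))).card : ℝ) ≤
          (((k : ℝ) - 1) / (k : ℝ)) *
            ((Finset.univ.filter (fun e =>
              (src e ∈ U ∧ tgt e ∉ U) ∨ (tgt e ∈ U ∧ src e ∉ U))).card : ℝ)) := by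
  have hk0 : (0:ℝ) < (k:ℝ) := by
    have h : 0 < k := by omega
    exact_mod_cast h
  have hk1 : (0:ℝ) ≤ ((k:ℝ) - 1) / (k:ℝ) := by
    have h : (1:ℝ) ≤ (k:ℝ) := by exact_mod_cast (by omega : 1 ≤ k)
    apply div_nonneg <;> linarith
  constructor
  · rintro ⟨F, o, hsub, hagr, hbal⟩ U
    have h1 : (E₁.filter (fun e => (o₁ e = true ∧ src e ∈ U ∧ tgt e ∉ U) ∨
        (o₁ e = false ∧ tgt e ∈ U ∧ src e ∉ U)))
        ⊆ F.filter (fun e => (o e = true ∧ src e ∈ U ∧ tgt e ∉ U) ∨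
        (o e = false ∧ tgt e ∈ U ∧ src e ∉ U)) := by
      intro e he
      rw [mem_filter] at he ⊢
      refine ⟨hsub he.1, ?_⟩
      rw [hagr e he.1]
      exact he.2
    have h2 : (F.filter (fun e => (src e ∈ U ∧ tgt e ∉ U) ∨ (tgt e ∈ U ∧ src e ∉ U)))
        ⊆ univ.filter (fun e => (src e ∈ U ∧ tgt e ∉ U) ∨ (tgt e ∈ U ∧ src e ∉ U)) :=
      filter_subset_filter _ (subset_univ F)
    calc ((E₁.filter (fun e => (o₁ e = true ∧ src e ∈ U ∧ tgt e ∉ U) ∨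
          (o₁ e = false ∧ tgt e ∈ U ∧ src e ∉ U))).card : ℝ)
        ≤ ((F.filter (fun e => (o e = true ∧ src e ∈ U ∧ tgt e ∉ U) ∨
          (o e = false ∧ tgt e ∈ U ∧ src e ∉ U))).card : ℝ) := by
          exact_mod_cast card_le_card h1
      _ ≤ (((k : ℝ) - 1) / (k : ℝ)) *
          ((F.filter (fun e => (src e ∈ U ∧ tgt e ∉ U) ∨ (tgt e ∈ U ∧ src e ∉ U))).card : ℝ) :=
          hbal U
      _ ≤ (((k : ℝ) - 1) / (k : ℝ)) *
          ((univ.filter (fun e => (src e ∈ U ∧ tgt e ∉ U) ∨ (tgt e ∈ U ∧ src e ∉ U))).card : ℝ) := by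
          apply mul_le_mul_of_nonneg_left _ hk1
          exact_mod_cast card_le_card h2
  · intro hcond
    -- translate the hypothesis into ℤ
    have hcondZ : ∀ U : Finset V,
        (k:ℤ) * ((E₁.filter (fun e => (o₁ e = true ∧ src e ∈ U ∧ tgt e ∉ U) ∨
            (o₁ e = false ∧ tgt e ∈ U ∧ src e ∉ U))).card : ℤ)
          ≤ ((k:ℤ) - 1) * ((univ.filter (fun e =>
            (src e ∈ U ∧ tgt e ∉ U) ∨ (tgt e ∈ U ∧ src e ∉ U))).card : ℤ) := by
      intro U
      have h := hcond U
      rw [div_mul_eq_mul_div, le_div_iff₀ hk0, mul_comm] at h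
      exact_mod_cast h
    -- Hoffman feasibility condition
    have hlu : ∀ e, lb E₁ o₁ k e ≤ ub E₁ o₁ k e := by
      intro e
      unfold lb ub
      split_ifs <;> omega
    have hhc : ∀ U : Finset V, inS src tgt (lb E₁ o₁ k) U ≤ outS src tgt (ub E₁ o₁ k) U := by
      intro U
      have hid := hoffman_cond_identity src tgt E₁ o₁ k U
      have h := hcondZ Uᶜ
      linarith
    obtain ⟨g, hg1, hg2, hg3⟩ := hoffman src tgt _ (lb E₁ o₁ k) (ub E₁ o₁ k) rfl hlu hhc
    have hgb : ∀ e, 1 - (k:ℤ) ≤ g e ∧ g e ≤ (k:ℤ) - 1 := by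
      intro e
      have h1 := hg1 e
      have h2 := hg2 e
      unfold lb at h1
      unfold ub at h2
      split_ifs at h1 h2 <;> omega
    have hE₁g : ∀ e ∈ E₁, (o₁ e = true → 1 ≤ g e) ∧ (o₁ e = false → g e ≤ -1) := by
      intro e he
      have h1 := hg1 e
      have h2 := hg2 e
      unfold lb at h1
      unfold ub at h2
      constructor
      · intro ho; rw [if_pos he, if_pos ho] at h1; exact h1
      · intro ho; rw [if_pos he, ho] at h2; simpa using h2
    refine ⟨univ.filter (fun e => g e ≠ 0), fun e => decide (0 < g e), ?_, ?_, ?_⟩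
    · intro e he
      simp only [mem_filter, mem_univ, true_and]
      rcases hE₁g e he with ⟨ht, hf⟩
      cases ho : o₁ e
      · have := hf ho; omega
      · have := ht ho; omega
    · intro e he
      rcases hE₁g e he with ⟨ht, hf⟩
      cases ho : o₁ e
      · have := hf ho
        simp only [decide_eq_false_iff_not, not_lt]
        omega
      · have := ht ho
        simp only [decide_eq_true_eq]
        omega
    · intro U
      -- the two relevant cardinalities, in ℤ
      have hcut : inS src tgt g U = outS src tgt g U := cut_eq src tgt g hg3 U
      have hout : (((univ.filter (fun e => g e ≠ 0)).filter (fun e =>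
          ((fun e => decide (0 < g e)) e = true ∧ src e ∈ U ∧ tgt e ∉ U) ∨
          ((fun e => decide (0 < g e)) e = false ∧ tgt e ∈ U ∧ src e ∉ U))).card : ℤ)
          ≤ ∑ e ∈ univ, (if src e ∈ U ∧ tgt e ∉ U ∧ 0 < g e then g e else if tgt e ∈ U ∧ src e ∉ U ∧ g e < 0 then -(g e) else 0) := by
        rw [card_filter_int]
        apply sum_le_sum
        intro e _
        simp only [mem_filter, mem_univ, true_and, decide_eq_true_eq,
          decide_eq_false_iff_not, not_lt]
        by_cases hs : src e ∈ U <;> by_cases ht : tgt e ∈ U <;>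
          simp [hs, ht] <;> (try split_ifs) <;> omega
      have hin : (∑ e ∈ univ, (if tgt e ∈ U ∧ src e ∉ U ∧ 0 < g e then g e else if src e ∈ U ∧ tgt e ∉ U ∧ g e < 0 then -(g e) else 0)) ≤ ((k:ℤ) - 1) * (((univ.filter (fun e => g e ≠ 0)).filter (fun e =>
          ((fun e => decide (0 < g e)) e = true ∧ tgt e ∈ U ∧ src e ∉ U) ∨
          ((fun e => decide (0 < g e)) e = false ∧ src e ∈ U ∧ tgt e ∉ U))).card : ℤ) := by
        rw [card_filter_int, Finset.mul_sum]
        apply sum_le_sum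
        intro e _
        have hb := hgb e
        simp only [mem_filter, mem_univ, true_and, decide_eq_true_eq,
          decide_eq_false_iff_not, not_lt, mul_ite, mul_one, mul_zero]
        by_cases hs : src e ∈ U <;> by_cases ht : tgt e ∈ U <;>
          simp [hs, ht] <;> (try split_ifs) <;> omega
      have hoi : (∑ e ∈ univ, (if src e ∈ U ∧ tgt e ∉ U ∧ 0 < g e then g e else if tgt e ∈ U ∧ src e ∉ U ∧ g e < 0 then -(g e) else 0)) = ∑ e ∈ univ, (if tgt e ∈ U ∧ src e ∉ U ∧ 0 < g e then g e else if src e ∈ U ∧ tgt e ∉ U ∧ g e < 0 then -(g e) else 0) := by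
        have hkey : (∑ e ∈ univ, (if src e ∈ U ∧ tgt e ∉ U ∧ 0 < g e then g e else if tgt e ∈ U ∧ src e ∉ U ∧ g e < 0 then -(g e) else 0)) - (∑ e ∈ univ, (if tgt e ∈ U ∧ src e ∉ U ∧ 0 < g e then g e else if src e ∈ U ∧ tgt e ∉ U ∧ g e < 0 then -(g e) else 0))
            = outS src tgt g U - inS src tgt g U := by
          rw [← sum_sub_distrib]
          simp only [outS, inS, sum_filter]
          rw [← sum_sub_distrib]
          refine sum_congr rfl fun e _ => ?_
          by_cases hs : src e ∈ U <;> by_cases ht : tgt e ∈ U <;>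
            simp [hs, ht] <;> (try split_ifs) <;> omega
        omega
      have hcross : (((univ.filter (fun e => g e ≠ 0)).filter (fun e =>
            (src e ∈ U ∧ tgt e ∉ U) ∨ (tgt e ∈ U ∧ src e ∉ U))).card : ℤ)
          = (((univ.filter (fun e => g e ≠ 0)).filter (fun e =>
            ((fun e => decide (0 < g e)) e = true ∧ src e ∈ U ∧ tgt e ∉ U) ∨
            ((fun e => decide (0 < g e)) e = false ∧ tgt e ∈ U ∧ src e ∉ U))).card : ℤ)
          + (((univ.filter (fun e => g e ≠ 0)).filter (fun e =>
            ((fun e => decide (0 < g e)) e = true ∧ tgt e ∈ U ∧ src e ∉ U) ∨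
            ((fun e => decide (0 < g e)) e = false ∧ src e ∈ U ∧ tgt e ∉ U))).card : ℤ) := by
        rw [card_filter_int, card_filter_int, card_filter_int, ← sum_add_distrib]
        refine sum_congr rfl fun e _ => ?_
        simp only [mem_filter, mem_univ, true_and, decide_eq_true_eq,
          decide_eq_false_iff_not, not_lt]
        by_cases hs : src e ∈ U <;> by_cases ht : tgt e ∈ U <;>
          simp [hs, ht] <;> (try split_ifs) <;> omega
      have hZ : (k:ℤ) * (((univ.filter (fun e => g e ≠ 0)).filter (fun e =>
          ((fun e => decide (0 < g e)) e = true ∧ src e ∈ U ∧ tgt e ∉ U) ∨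
          ((fun e => decide (0 < g e)) e = false ∧ tgt e ∈ U ∧ src e ∉ U))).card : ℤ)
          ≤ ((k:ℤ) - 1) * (((univ.filter (fun e => g e ≠ 0)).filter (fun e =>
            (src e ∈ U ∧ tgt e ∉ U) ∨ (tgt e ∈ U ∧ src e ∉ U))).card : ℤ) := by
        rw [hcross, mul_add]
        have hfin := le_trans hout (le_trans hoi.le hin)
        have hnn : (0:ℤ) ≤ (((univ.filter (fun e => g e ≠ 0)).filter (fun e =>
          ((fun e => decide (0 < g e)) e = true ∧ src e ∈ U ∧ tgt e ∉ U) ∨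
          ((fun e => decide (0 < g e)) e = false ∧ tgt e ∈ U ∧ src e ∉ U))).card : ℤ) := by
          positivity
        nlinarith [hfin, hnn]
      rw [div_mul_eq_mul_div, le_div_iff₀ hk0, mul_comm]
      exact_mod_cast hZ
end

section
/- Let (Ē, f) be a nowhere-zero 6-flow on an undirected graph G with nonnegative symmetric costs c, and suppose f is locally optimal: for every directed cycle C contained in Ē, Σ_{e∈C} c(e)f(e) ≤ 3·Σ_{e∈C} c(e). Then Σ_{e∈Ē} c(e)f(e) ≤ 3·Σ_{e∈Ē} c(e). Consequently, f costs at most 3 times the cost of any nowhere-zero flow on G. -/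
open Finset

private lemma zmod_succ_val (n : ℕ) (k : ZMod (n + 1)) :
    (k + 1).val = if k.val = n then 0 else k.val + 1 := by
  have hk := ZMod.val_lt k
  have h1 : (1 : ZMod (n + 1)).val = 1 % (n + 1) := ZMod.val_one_eq_one_mod _
  rw [ZMod.val_add, h1]
  cases n with
  | zero => interval_cases h : k.val; simp_all
  | succ m =>
    have : 1 % (m + 1 + 1) = 1 := Nat.mod_eq_of_lt (by omega)
    rw [this]
    by_cases h : k.val = m + 1
    · simp [h]
    · rw [if_neg h, Nat.mod_eq_of_lt (by omega)]

private lemma exists_cycle {V E : Type} [Fintype V] [DecidableEq V] [Fintype E]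
    (src tgt : E → V) (g : E → ℤ) (hg : ∀ e, 0 ≤ g e)
    (hcons : ∀ v : V,
      (∑ e : E, if src e = v then g e else 0) =
      (∑ e : E, if tgt e = v then g e else 0))
    (e₀ : E) (h0 : 1 ≤ g e₀) :
    ∃ (n : ℕ) (es : ZMod (n + 1) → E), Function.Injective es ∧
      (∀ i, tgt (es i) = src (es (i + 1))) ∧ (∀ i, 1 ≤ g (es i)) := by
  classical
  have step : ∀ e : E, 1 ≤ g e → ∃ e', src e' = tgt e ∧ 1 ≤ g e' := by
    intro e he
    by_contra hno
    push_neg at hno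
    have h1 : (∑ e' : E, if src e' = tgt e then g e' else 0) = 0 := by
      apply Finset.sum_eq_zero
      intro e' _
      split_ifs with hs
      · have := hno e' hs
        have := hg e'
        omega
      · rfl
    have h2 : g e ≤ ∑ e' : E, if tgt e' = tgt e then g e' else 0 := by
      have := Finset.single_le_sum (f := fun e' : E => if tgt e' = tgt e then g e' else 0)
        (fun e' _ => by split_ifs; exacts [hg e', le_refl 0]) (Finset.mem_univ e)
      simpa using this
    have := hcons (tgt e)
    omega
  -- build an infinite walk in the support of g
  let a : ℕ → {e : E // 1 ≤ g e} := fun m => Nat.rec ⟨e₀, h0⟩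
      (fun _ p => ⟨(step p.1 p.2).choose, (step p.1 p.2).choose_spec.2⟩) m
  have ha : ∀ m : ℕ, src (a (m + 1)).1 = tgt (a m).1 :=
    fun m => (step (a m).1 (a m).2).choose_spec.1
  -- pigeonhole
  obtain ⟨x, y, hxy, hval⟩ := Finite.exists_ne_map_eq_of_infinite a
  have hex : ∃ jj, ∃ ii, ii < jj ∧ a ii = a jj := by
    rcases lt_or_gt_of_ne hxy with h | h
    · exact ⟨y, x, h, hval⟩
    · exact ⟨x, y, h, hval.symm⟩
  haveI : DecidablePred fun jj => ∃ ii, ii < jj ∧ a ii = a jj := Classical.decPred _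
  let j := Nat.find hex
  obtain ⟨i, hij, haij⟩ := Nat.find_spec hex
  have hinj' : ∀ p q, p < q → q < j → a p ≠ a q := by
    intro p q hpq hqj h
    exact Nat.find_min hex hqj ⟨p, hpq, h⟩
  set n := j - i - 1 with hndef
  have hji : i + n + 1 = j := by omega
  refine ⟨n, fun k => (a (i + k.val)).1, ?_, ?_, fun k => (a (i + k.val)).2⟩
  · -- injectivity
    intro k k' h
    have hsub : a (i + k.val) = a (i + k'.val) := Subtype.ext h
    have hk := ZMod.val_lt k
    have hk' := ZMod.val_lt k'
    rcases lt_trichotomy (i + k.val) (i + k'.val) with h1 | h1 | h1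
    · exact absurd hsub (hinj' _ _ h1 (by omega))
    · exact ZMod.val_injective _ (by omega : k.val = k'.val)
    · exact absurd hsub.symm (hinj' _ _ h1 (by omega))
  · -- cycle condition
    intro k
    dsimp only
    rw [zmod_succ_val]
    by_cases hkn : k.val = n
    · rw [if_pos hkn, hkn]
      have h1 : src (a (i + n + 1)).1 = tgt (a (i + n)).1 := ha _
      rw [hji] at h1
      rw [← haij] at h1
      simpa using h1.symm
    · rw [if_neg hkn]
      have h1 : src (a (i + k.val + 1)).1 = tgt (a (i + k.val)).1 := ha _
      rw [show i + (k.val + 1) = i + k.val + 1 by omega]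
      exact h1.symm

private lemma circ_bound {V E : Type} [Fintype V] [DecidableEq V] [Fintype E]
    (src tgt : E → V) (c : E → ℤ) (f : E → ℤ)
    (hlocal : ∀ (n : ℕ) (es : ZMod (n + 1) → E), Function.Injective es →
      (∀ i, tgt (es i) = src (es (i + 1))) →
      (∑ i : ZMod (n + 1), c (es i) * f (es i)) ≤ 3 * ∑ i : ZMod (n + 1), c (es i)) :
    ∀ (N : ℕ) (g : E → ℤ), (∀ e, 0 ≤ g e) →
      (∀ v : V,
        (∑ e : E, if src e = v then g e else 0) =
        (∑ e : E, if tgt e = v then g e else 0)) →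
      (∑ e : E, g e) ≤ N →
      (∑ e : E, c e * f e * g e) ≤ 3 * ∑ e : E, c e * g e := by
  classical
  intro N
  induction N with
  | zero =>
    intro g hg hcons hsum
    have hz : ∀ e : E, g e = 0 := by
      intro e
      by_contra hne
      have h1 : (1 : ℤ) ≤ g e := by have := hg e; omega
      have h2 : g e ≤ ∑ e' : E, g e' :=
        Finset.single_le_sum (fun e' _ => hg e') (Finset.mem_univ e)
      simp at hsum
      omega
    simp [hz]
  | succ N ih =>
    intro g hg hcons hsum
    by_cases hz : ∀ e : E, g e = 0
    · simp [hz]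
    · push_neg at hz
      obtain ⟨e₀, he₀⟩ := hz
      have h0 : 1 ≤ g e₀ := by have := hg e₀; omega
      obtain ⟨n, es, hinj, hcyc, hpos⟩ := exists_cycle src tgt g hg hcons e₀ h0
      -- indicator of the cycle
      set χ : E → ℤ := fun e => ∑ i : ZMod (n + 1), if es i = e then 1 else 0 with hχdef
      have hchi_sum : ∀ h : E → ℤ, (∑ e : E, h e * χ e) = ∑ i : ZMod (n + 1), h (es i) := by
        intro h
        simp only [hχdef, Finset.mul_sum, mul_ite, mul_one, mul_zero]
        rw [Finset.sum_comm]
        apply Finset.sum_congr rfl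
        intro i _
        simp
      have hchi_nonneg : ∀ e, 0 ≤ χ e := by
        intro e
        apply Finset.sum_nonneg
        intro i _
        split_ifs <;> omega
      have hchi_card : ∀ e : E, χ e = ((Finset.univ.filter (fun i => es i = e)).card : ℤ) := by
        intro e
        simp [hχdef, Finset.sum_boole]
      have hchi_le : ∀ e, χ e ≤ g e := by
        intro e
        rcases Finset.eq_empty_or_nonempty (Finset.univ.filter (fun i => es i = e)) with hemp | hne
        · rw [hchi_card, hemp]
          simpa using hg e
        · obtain ⟨i, hi⟩ := hne
          rw [Finset.mem_filter] at hi
          have hge : 1 ≤ g e := hi.2 ▸ hpos i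
          have hcard : (Finset.univ.filter (fun i => es i = e)).card ≤ 1 := by
            apply Finset.card_le_one.mpr
            intro a ha b hb
            rw [Finset.mem_filter] at ha hb
            exact hinj (ha.2.trans hb.2.symm)
          rw [hchi_card]
          omega
      have hchi_pos : 1 ≤ ∑ e : E, χ e := by
        have h1 : 1 ≤ χ (es 0) := by
          have := Finset.single_le_sum
            (f := fun i : ZMod (n + 1) => if es i = es 0 then (1 : ℤ) else 0)
            (fun i _ => by split_ifs <;> omega) (Finset.mem_univ 0)
          simpa [hχdef] using this
        have h2 : χ (es 0) ≤ ∑ e : E, χ e :=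
          Finset.single_le_sum (fun e _ => hchi_nonneg e) (Finset.mem_univ (es 0))
        omega
      -- conservation of χ
      have hchi_side : ∀ (st : E → V) (v : V),
          (∑ e : E, if st e = v then χ e else 0) =
          ∑ i : ZMod (n + 1), (if st (es i) = v then (1 : ℤ) else 0) := by
        intro st v
        have h1 : (∑ e : E, if st e = v then χ e else 0) =
            ∑ e : E, (fun e => if st e = v then (1 : ℤ) else 0) e * χ e := by
          apply Finset.sum_congr rfl
          intro e _
          dsimp only
          split_ifs with h <;> simp
        rw [h1, hchi_sum]
      have hchi_cons : ∀ v : V,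
          (∑ e : E, if src e = v then χ e else 0) =
          (∑ e : E, if tgt e = v then χ e else 0) := by
        intro v
        rw [hchi_side src v, hchi_side tgt v]
        have := Fintype.sum_equiv (Equiv.addRight (1 : ZMod (n + 1)))
          (fun i => if tgt (es i) = v then (1 : ℤ) else 0)
          (fun i => if src (es i) = v then (1 : ℤ) else 0)
          (fun i => by simp [hcyc i]; congr)
        rw [this]
      -- the reduced circulation
      set g' : E → ℤ := fun e => g e - χ e with hg'def
      have hg'_nonneg : ∀ e, 0 ≤ g' e := fun e => by
        have := hchi_le e; simp [hg'def]; omega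
      have hg'_cons : ∀ v : V,
          (∑ e : E, if src e = v then g' e else 0) =
          (∑ e : E, if tgt e = v then g' e else 0) := by
        intro v
        have hs : ∀ (st : E → V),
            (∑ e : E, if st e = v then g' e else 0) =
            (∑ e : E, if st e = v then g e else 0) - (∑ e : E, if st e = v then χ e else 0) := by
          intro st
          rw [← Finset.sum_sub_distrib]
          apply Finset.sum_congr rfl
          intro e _
          split_ifs <;> simp [hg'def]
        rw [hs src, hs tgt, hcons v, hchi_cons v]
      have hg'_sum : (∑ e : E, g' e) ≤ N := by
        have : (∑ e : E, g' e) = (∑ e : E, g e) - ∑ e : E, χ e := by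
          rw [← Finset.sum_sub_distrib]
        push_cast at hsum ⊢
        omega
      have hih := ih g' hg'_nonneg hg'_cons hg'_sum
      have hloc := hlocal n es hinj hcyc
      have e1 : (∑ e : E, c e * f e * g e) =
          (∑ e : E, c e * f e * g' e) + ∑ i : ZMod (n + 1), c (es i) * f (es i) := by
        rw [← hchi_sum (fun e => c e * f e)]
        rw [← Finset.sum_add_distrib]
        apply Finset.sum_congr rfl
        intro e _
        simp [hg'def]
        ring
      have e2 : (∑ e : E, c e * g e) =
          (∑ e : E, c e * g' e) + ∑ i : ZMod (n + 1), c (es i) := by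
        rw [← hchi_sum c, ← Finset.sum_add_distrib]
        apply Finset.sum_congr rfl
        intro e _
        simp [hg'def]
        ring
      rw [e1, e2]
      linarith

/-- A locally optimal nowhere-zero 6-flow (Ē, f) — where no directed
cycle C in Ē has Σ_{e∈C} c(e)f(e) > 3Σ_{e∈C} c(e) — satisfies
Σ c(e)f(e) ≤ 3Σ c(e); consequently its cost is at most 3 times the cost of any
nowhere-zero flow on the same graph (with symmetric costs c). The edge set E with
maps src, tgt is the oriented graph Ē; an arbitrary nowhere-zero flow is an
orientation `o : E → Bool` with positive flow values `g` conserved at every vertex. -/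
theorem locally_optimal_three_approx {V E : Type} [Fintype V] [DecidableEq V] [Fintype E]
    (src tgt : E → V) (c : E → ℤ) (hc : ∀ e, 0 ≤ c e)
    (f : E → ℤ) (hf : ∀ e, 1 ≤ f e ∧ f e ≤ 5)
    (hcons : ∀ v : V,
      (∑ e : E, if src e = v then f e else 0) =
      (∑ e : E, if tgt e = v then f e else 0))
    (hlocal : ∀ (n : ℕ) (es : ZMod (n + 1) → E), Function.Injective es →
      (∀ i, tgt (es i) = src (es (i + 1))) →
      (∑ i : ZMod (n + 1), c (es i) * f (es i)) ≤ 3 * ∑ i : ZMod (n + 1), c (es i)) :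
    ((∑ e : E, c e * f e) ≤ 3 * ∑ e : E, c e) ∧
    (∀ (o : E → Bool) (g : E → ℤ), (∀ e, 1 ≤ g e) →
      (∀ v : V,
        (∑ e : E, if src e = v then (if o e then g e else -g e) else 0) =
        (∑ e : E, if tgt e = v then (if o e then g e else -g e) else 0)) →
      (∑ e : E, c e * f e) ≤ 3 * ∑ e : E, c e * g e) := by
  have hfnn : ∀ e, 0 ≤ f e := fun e => by have := (hf e).1; omega
  have hsum : (∑ e : E, f e) ≤ ((∑ e : E, f e).toNat : ℤ) := Int.self_le_toNat _
  have key := circ_bound src tgt c f hlocal (∑ e : E, f e).toNat f hfnn hcons hsum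
  -- key : Σ c f f ≤ 3 Σ c f
  have hpt : (∑ e : E, (6 * (c e * f e) - 9 * c e)) ≤ ∑ e : E, c e * f e * f e := by
    apply Finset.sum_le_sum
    intro e _
    have h1 := hc e
    have h2 := (hf e).1
    nlinarith [sq_nonneg (f e - 3)]
  have hexp : (∑ e : E, (6 * (c e * f e) - 9 * c e)) =
      6 * (∑ e : E, c e * f e) - 9 * ∑ e : E, c e := by
    rw [Finset.sum_sub_distrib, ← Finset.mul_sum, ← Finset.mul_sum]
  rw [hexp] at hpt
  have main : (∑ e : E, c e * f e) ≤ 3 * ∑ e : E, c e := by linarith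
  refine ⟨main, ?_⟩
  intro o g hg _
  have h1 : (∑ e : E, c e) ≤ ∑ e : E, c e * g e := by
    apply Finset.sum_le_sum
    intro e _
    nlinarith [hc e, hg e]
  linarith
end

section
/- If every instance of the min-cost nowhere-zero k-flow problem admits an (α,β)-bicriteria approximation (a nowhere-zero βk-flow of cost at most α times the min cost of a nowhere-zero k-flow), then every instance of the min-cost k-cut-balanced orientation problem admits a ((k−1)α, β)-bicriteria approximation: specifically, if (Ē, f) is a nowhere-zero βk-flow with c(f) ≤ α·c(f₁*) where f₁* is a min-cost nowhere-zero k-flow, then Ē is a βk-cut-balanced orientation with c(Ē) ≤ (k−1)α·c(Ē₂*) where Ē₂* is a min-cost k-cut-balanced orientation. -/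
open Finset
set_option linter.unusedSectionVars false

variable {V E : Type} [Fintype V] [DecidableEq V] [Fintype E]

/-- `(o, f)` is a nowhere-zero m-flow: values in {1,...,m−1} on the chosen
orientation (`o e = true` means src e → tgt e), conserved at every vertex. -/
def NZFlow (src tgt : E → V) (m : ℕ) (o : E → Bool) (f : E → ℤ) : Prop :=
  (∀ e, 1 ≤ f e ∧ f e ≤ (m : ℤ) - 1) ∧
  ∀ v : V,
    (∑ e : E, if (if o e then src e else tgt e) = v then f e else 0) =
    (∑ e : E, if (if o e then tgt e else src e) = v then f e else 0)

/-- Orientation `o` is m-cut-balanced: m·|δ⁺(U)| ≥ |δ(U)| for every cut. -/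
def CutBalanced (src tgt : E → V) (m : ℕ) (o : E → Bool) : Prop :=
  ∀ U : Finset V, U.Nonempty → U ≠ Finset.univ →
    ((Finset.univ.filter (fun e => (o e = true ∧ src e ∈ U ∧ tgt e ∉ U) ∨
        (o e = false ∧ tgt e ∈ U ∧ src e ∉ U))).card : ℝ) ≥
      (1 / (m : ℝ)) * ((Finset.univ.filter (fun e =>
        (src e ∈ U ∧ tgt e ∉ U) ∨ (tgt e ∈ U ∧ src e ∉ U))).card : ℝ)

/-- Cost of an orientation: asymmetric costs `c e b` for edge `e` oriented by `b`. -/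
def costOrient (c : E → Bool → ℤ) (o : E → Bool) : ℤ := ∑ e : E, c e (o e)

/-- Cost of a flow `(o, f)`. -/
def costFlow (c : E → Bool → ℤ) (o : E → Bool) (f : E → ℤ) : ℤ := ∑ e : E, c e (o e) * f e

namespace WNZF

variable {V E : Type} [Fintype V] [DecidableEq V] [Fintype E] [DecidableEq E]

variable (tl hd : E → V) (K : ℤ)

def exc (f : E → ℤ) (v : V) : ℤ :=
  (∑ e : E, if hd e = v then f e else 0) - (∑ e : E, if tl e = v then f e else 0)

def Bounds (f : E → ℤ) : Prop := ∀ e, 1 ≤ f e ∧ f e ≤ K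

def Step (f : E → ℤ) (u w : V) : Prop :=
  ∃ a : E, (tl a = u ∧ hd a = w ∧ f a < K) ∨ (tl a = w ∧ hd a = u ∧ 1 < f a)

def ReachesIn (f : E → ℤ) : ℕ → V → V → Prop
  | 0, u, w => u = w
  | n+1, u, w => ∃ b, Step tl hd K f u b ∧ ReachesIn f n b w

def Phi (f : E → ℤ) : ℤ := ∑ v : V, max (exc tl hd f v) 0

lemma sum_exc (f : E → ℤ) : ∑ v : V, exc tl hd f v = 0 := by
  have h1 : ∀ g : E → V, (∑ v : V, ∑ e : E, if g e = v then f e else 0) = ∑ e : E, f e := by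
    intro g; rw [Finset.sum_comm]
    exact Finset.sum_congr rfl fun e _ => by simp [Finset.sum_ite_eq]
  simp only [exc, Finset.sum_sub_distrib, h1, sub_self]

lemma exc_sum_over (f : E → ℤ) (U : Finset V) :
    ∑ v ∈ U, exc tl hd f v =
      (∑ e ∈ univ.filter (fun e => hd e ∈ U ∧ tl e ∉ U), f e)
      - (∑ e ∈ univ.filter (fun e => tl e ∈ U ∧ hd e ∉ U), f e) := by
  have h1 : ∀ g : E → V, (∑ v ∈ U, ∑ e : E, if g e = v then f e else 0)
      = ∑ e : E, (if g e ∈ U then f e else 0) := by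
    intro g; rw [Finset.sum_comm]
    exact Finset.sum_congr rfl fun e _ => by simp [Finset.sum_ite_eq]
  simp only [exc, Finset.sum_sub_distrib, h1]
  rw [Finset.sum_filter, Finset.sum_filter, ← Finset.sum_sub_distrib, ← Finset.sum_sub_distrib]
  refine Finset.sum_congr rfl fun e _ => ?_
  by_cases h1 : hd e ∈ U <;> by_cases h2 : tl e ∈ U <;> simp [h1, h2]

lemma sum_if_shift (g : E → V) (f : E → ℤ) (a : E) (d : ℤ) (v : V) :
    (∑ e : E, if g e = v then (if e = a then f e + d else f e) else 0)
      = (∑ e : E, if g e = v then f e else 0) + (if g a = v then d else 0) := by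
  have h : (if g a = v then d else 0) = ∑ e : E, if e = a then (if g e = v then d else 0) else 0 := by
    rw [Finset.sum_ite_eq' univ a (fun e => if g e = v then d else 0)]; simp
  rw [h, ← Finset.sum_add_distrib]
  refine Finset.sum_congr rfl fun e _ => ?_
  by_cases h1 : e = a <;> by_cases h2 : g e = v <;> simp [h1, h2] <;> split_ifs <;> ring

lemma ite_comm' (x y : V) (d : ℤ) : (if x = y then d else 0) = (if y = x then d else 0) := by
  by_cases h : x = y <;> simp [h, eq_comm]

lemma ite_neg (p : Prop) [Decidable p] : (if p then (-1 : ℤ) else 0) = -(if p then 1 else 0) := by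
  split_ifs <;> ring

lemma push {f : E → ℤ} (hb : Bounds K f) {u w : V} (h : Step tl hd K f u w) :
    ∃ f' : E → ℤ, Bounds K f' ∧
      (∀ v, exc tl hd f' v = exc tl hd f v + (if v = w then 1 else 0) - (if v = u then 1 else 0)) ∧
      (∀ x y, Step tl hd K f x y → Step tl hd K f' x y ∨ (x = u ∧ y = w)) := by
  obtain ⟨a, ha⟩ := h
  rcases ha with ⟨hta, hha, hfa⟩ | ⟨hta, hha, hfa⟩
  · refine ⟨fun e => if e = a then f e + 1 else f e, ?_, ?_, ?_⟩
    · intro e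
      have h1 := (hb e).1; have h2 := (hb e).2
      by_cases he : e = a
      · subst he; simp only [if_pos rfl]; omega
      · simp only [if_neg he]; omega
    · intro v
      simp only [exc, sum_if_shift, hta, hha]
      rw [ite_comm' w v, ite_comm' u v]
      ring
    · rintro x y ⟨b, ⟨h1, h2, h3⟩ | ⟨h1, h2, h3⟩⟩
      · by_cases hba : b = a
        · subst hba; exact Or.inr ⟨hta ▸ h1.symm ▸ rfl, hha ▸ h2.symm ▸ rfl⟩
        · exact Or.inl ⟨b, Or.inl ⟨h1, h2, by simpa [hba] using h3⟩⟩
      · by_cases hba : b = a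
        · subst hba; refine Or.inl ⟨b, Or.inr ⟨h1, h2, ?_⟩⟩
          simp only [if_pos rfl]; omega
        · exact Or.inl ⟨b, Or.inr ⟨h1, h2, by simpa [hba] using h3⟩⟩
  · refine ⟨fun e => if e = a then f e - 1 else f e, ?_, ?_, ?_⟩
    · intro e
      have h1 := (hb e).1; have h2 := (hb e).2
      by_cases he : e = a
      · subst he; simp only [if_pos rfl]; omega
      · simp only [if_neg he]; omega
    · intro v
      have hrw : ∀ e : E, (if e = a then f e - 1 else f e) = (if e = a then f e + (-1) else f e) := by
        intro e; split_ifs <;> ring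
      simp only [exc, hrw, sum_if_shift, hta, hha]
      rw [ite_comm' u v, ite_comm' w v, ite_neg, ite_neg]
      ring
    · rintro x y ⟨b, ⟨h1, h2, h3⟩ | ⟨h1, h2, h3⟩⟩
      · by_cases hba : b = a
        · subst hba; refine Or.inl ⟨b, Or.inl ⟨h1, h2, ?_⟩⟩
          simp only [if_pos rfl]; omega
        · exact Or.inl ⟨b, Or.inl ⟨h1, h2, by simpa [hba] using h3⟩⟩
      · by_cases hba : b = a
        · subst hba; exact Or.inr ⟨hha ▸ h2.symm ▸ rfl, hta ▸ h1.symm ▸ rfl⟩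
        · exact Or.inl ⟨b, Or.inr ⟨h1, h2, by simpa [hba] using h3⟩⟩

lemma convPath (f f' : E → ℤ) (u w v : V)
    (hpres : ∀ x y, Step tl hd K f x y → Step tl hd K f' x y ∨ (x = u ∧ y = w)) :
    ∀ n x, ReachesIn tl hd K f n x v →
      (∃ m, m ≤ n ∧ ReachesIn tl hd K f' m x v) ∨ (∃ m, m ≤ n ∧ ReachesIn tl hd K f' m w v) := by
  intro n
  induction n with
  | zero => intro x hx; exact Or.inl ⟨0, le_rfl, hx⟩
  | succ n ih =>
    rintro x ⟨b, hs, hr⟩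
    rcases ih b hr with ⟨m, hm, hr'⟩ | ⟨m, hm, hr'⟩
    · rcases hpres x b hs with h' | ⟨hx, hbw⟩
      · exact Or.inl ⟨m + 1, Nat.succ_le_succ hm, ⟨b, h', hr'⟩⟩
      · exact Or.inr ⟨m, hm.trans (Nat.le_succ n), hbw ▸ hr'⟩
    · exact Or.inr ⟨m, hm.trans (Nat.le_succ n), hr'⟩

lemma reachesIn_snoc (f : E → ℤ) :
    ∀ n u x, ReachesIn tl hd K f n u x → ∀ y, Step tl hd K f x y →
      ReachesIn tl hd K f (n + 1) u y := by
  intro n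
  induction n with
  | zero =>
    intro u x h y hs
    exact ⟨y, (h : u = x) ▸ hs, rfl⟩
  | succ n ih =>
    rintro u x ⟨b, hs, hr⟩ y hy
    exact ⟨b, hs, ih b x hr y hy⟩

lemma phi_shift (f f' : E → ℤ) (u w : V) (hne : u ≠ w)
    (hexc : ∀ v, exc tl hd f' v = exc tl hd f v + (if v = w then 1 else 0) - (if v = u then 1 else 0))
    (hu : 0 < exc tl hd f u) :
    Phi tl hd f' = Phi tl hd f + (if exc tl hd f w < 0 then 0 else 1) - 1 := by
  have key : ∀ v, max (exc tl hd f' v) 0 = max (exc tl hd f v) 0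
      + (if v = w then (if exc tl hd f w < 0 then 0 else 1) else 0)
      - (if v = u then 1 else 0) := by
    intro v
    rw [hexc v]
    rcases eq_or_ne v w with h1 | h1
    · have h2 : v ≠ u := fun hvu => hne (hvu ▸ h1)
      subst h1
      simp only [if_pos rfl, if_neg h2, max_def]
      split_ifs <;> omega
    · rcases eq_or_ne v u with h2 | h2
      · subst h2
        simp only [if_neg h1, if_pos rfl, max_def]
        split_ifs <;> omega
      · simp [h1, h2]
  unfold Phi
  rw [Finset.sum_congr rfl (fun v _ => key v)]
  rw [Finset.sum_sub_distrib, Finset.sum_add_distrib]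
  simp [Finset.sum_ite_eq']

lemma decrease : ∀ n : ℕ, ∀ f : E → ℤ, Bounds K f → ∀ s v : V, 0 < exc tl hd f s →
    exc tl hd f v < 0 → ReachesIn tl hd K f n s v →
    ∃ f', Bounds K f' ∧ Phi tl hd f' < Phi tl hd f := by
  intro n
  induction n using Nat.strong_induction_on with
  | _ n ih =>
    intro f hb s v hs hv hr
    match n, ih, hr with
    | 0, _, hr =>
      exact absurd (hr : s = v) (fun h => by rw [h] at hs; omega)
    | (n+1), ih, ⟨b, hstep, hrest⟩ =>
      rcases eq_or_ne s b with hsb | hsb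
      · exact ih n (Nat.lt_succ_self n) f hb s v hs hv (hsb ▸ hrest)
      · obtain ⟨f', hb', hexc', hpres⟩ := push tl hd K hb hstep
        have hphi := phi_shift tl hd f f' s b hsb hexc' hs
        by_cases hbneg : exc tl hd f b < 0
        · refine ⟨f', hb', ?_⟩
          rw [hphi, if_pos hbneg]; omega
        · have hphi' : Phi tl hd f' = Phi tl hd f := by rw [hphi, if_neg hbneg]; ring
          have hvb : v ≠ b := fun h => hbneg (h ▸ hv)
          have hvs : v ≠ s := fun h => by rw [h] at hv; omega
          have hv' : exc tl hd f' v < 0 := by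
            rw [hexc' v, if_neg hvb, if_neg hvs]; omega
          have hb'pos : 0 < exc tl hd f' b := by
            rw [hexc' b, if_pos rfl, if_neg (Ne.symm hsb)]; omega
          have hconv := convPath tl hd K f f' s b v hpres n b hrest
          rcases hconv with ⟨m, hm, hr'⟩ | ⟨m, hm, hr'⟩ <;>
          · obtain ⟨f'', hb'', hphi''⟩ := ih m (Nat.lt_succ_of_le hm) f' hb' b v hb'pos hv' hr'
            exact ⟨f'', hb'', by omega⟩

lemma phi_nonneg (f : E → ℤ) : 0 ≤ Phi tl hd f :=
  Finset.sum_nonneg fun v _ => le_max_right _ _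

lemma exc_zero_of_phi (f : E → ℤ) (h : Phi tl hd f = 0) : ∀ v, exc tl hd f v = 0 := by
  have h1 : ∀ v : V, v ∈ (univ : Finset V) → max (exc tl hd f v) 0 = 0 :=
    (Finset.sum_eq_zero_iff_of_nonneg (fun i _ => le_max_right _ _)).mp h
  have h2 : ∀ v : V, exc tl hd f v ≤ 0 := fun v =>
    (le_max_left _ _).trans_eq (h1 v (mem_univ v))
  intro v
  exact (Finset.sum_eq_zero_iff_of_nonpos (fun i _ => h2 i)).mp (sum_exc tl hd f) v (mem_univ v)

lemma hoffman (hK : 1 ≤ K)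
    (hcut : ∀ U : Finset V, U.Nonempty → U ≠ Finset.univ →
      ((univ.filter (fun e => hd e ∈ U ∧ tl e ∉ U)).card : ℤ) ≤
        K * ((univ.filter (fun e => tl e ∈ U ∧ hd e ∉ U)).card : ℤ)) :
    ∃ f : E → ℤ, Bounds K f ∧ ∀ v, exc tl hd f v = 0 := by
  classical
  suffices H : ∀ N : ℕ, ∀ f : E → ℤ, Bounds K f → Phi tl hd f ≤ (N : ℤ) →
      ∃ g, Bounds K g ∧ ∀ v, exc tl hd g v = 0 by
    exact H (Phi tl hd (fun _ => 1)).toNat (fun _ => 1) (fun e => ⟨le_rfl, hK⟩)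
      (Int.self_le_toNat _)
  intro N
  induction N with
  | zero =>
    intro f hb hP
    exact ⟨f, hb, exc_zero_of_phi tl hd f (le_antisymm (by exact_mod_cast hP) (phi_nonneg tl hd f))⟩
  | succ N ih =>
    intro f hb hP
    by_cases h0 : Phi tl hd f = 0
    · exact ⟨f, hb, exc_zero_of_phi tl hd f h0⟩
    · have hpos : 0 < Phi tl hd f := lt_of_le_of_ne (phi_nonneg tl hd f) (Ne.symm h0)
      have hex : ∃ s : V, 0 < exc tl hd f s := by
        by_contra hc
        push_neg at hc
        apply h0
        unfold Phi
        exact Finset.sum_eq_zero fun v _ => max_eq_right (hc v)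
      obtain ⟨s, hs⟩ := hex
      have hdef : ∃ v, exc tl hd f v < 0 := by
        by_contra hc
        push_neg at hc
        have := (Finset.sum_eq_zero_iff_of_nonneg (fun i _ => hc i)).mp (sum_exc tl hd f)
          s (mem_univ s)
        omega
      obtain ⟨v₀, hv₀⟩ := hdef
      set R : Finset V := univ.filter (fun x => ∃ n, ReachesIn tl hd K f n s x) with hR
      by_cases hcase : ∃ x ∈ R, exc tl hd f x < 0
      · obtain ⟨x, hxR, hx⟩ := hcase
        obtain ⟨n, hn⟩ : ∃ n, ReachesIn tl hd K f n s x := (mem_filter.mp hxR).2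
        obtain ⟨f', hb', hphi⟩ := decrease tl hd K n f hb s x hs hx hn
        refine ih f' hb' ?_
        push_cast at hP ⊢
        omega
      · push_neg at hcase
        have hsR : s ∈ R := mem_filter.mpr ⟨mem_univ s, 0, rfl⟩
        have hv₀R : v₀ ∉ R := fun h => absurd hv₀ (not_lt.mpr (hcase v₀ h))
        have hRne : R.Nonempty := ⟨s, hsR⟩
        have hRuniv : R ≠ univ := fun h => hv₀R (h ▸ mem_univ v₀)
        have hclosed : ∀ x ∈ R, ∀ y, Step tl hd K f x y → y ∈ R := by
          intro x hx y hstep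
          obtain ⟨n, hn⟩ := (mem_filter.mp hx).2
          exact mem_filter.mpr ⟨mem_univ y, n + 1, reachesIn_snoc tl hd K f n s x hn y hstep⟩
        have hout : ∀ e, tl e ∈ R → hd e ∉ R → f e = K := by
          intro e h1 h2
          by_contra hne
          exact h2 (hclosed _ h1 _ ⟨e, Or.inl ⟨rfl, rfl, lt_of_le_of_ne (hb e).2 hne⟩⟩)
        have hin : ∀ e, hd e ∈ R → tl e ∉ R → f e = 1 := by
          intro e h1 h2
          by_contra hne
          exact h2 (hclosed _ h1 _ ⟨e, Or.inr ⟨rfl, rfl, lt_of_le_of_ne (hb e).1 (Ne.symm hne)⟩⟩)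
        have hsum := exc_sum_over tl hd f R
        have hpos' : 0 < ∑ v ∈ R, exc tl hd f v :=
          Finset.sum_pos' (fun i hi => hcase i hi) ⟨s, hsR, hs⟩
        have hA : (∑ e ∈ univ.filter (fun e => hd e ∈ R ∧ tl e ∉ R), f e)
            = ((univ.filter (fun e => hd e ∈ R ∧ tl e ∉ R)).card : ℤ) := by
          rw [Finset.sum_congr rfl (fun e he => hin e (mem_filter.mp he).2.1 (mem_filter.mp he).2.2)]
          simp [mul_comm]
        have hB : (∑ e ∈ univ.filter (fun e => tl e ∈ R ∧ hd e ∉ R), f e)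
            = K * ((univ.filter (fun e => tl e ∈ R ∧ hd e ∉ R)).card : ℤ) := by
          rw [Finset.sum_congr rfl (fun e he => hout e (mem_filter.mp he).2.1 (mem_filter.mp he).2.2)]
          simp [mul_comm]
        have hcut' := hcut R hRne hRuniv
        rw [hA, hB] at hsum
        linarith

lemma card_le_of_flow (M : ℤ) (f : E → ℤ) (hb : ∀ e, 1 ≤ f e ∧ f e ≤ M)
    (hcons : ∀ v, exc tl hd f v = 0) (U : Finset V) :
    ((univ.filter (fun e => hd e ∈ U ∧ tl e ∉ U)).card : ℤ) ≤
      M * ((univ.filter (fun e => tl e ∈ U ∧ hd e ∉ U)).card : ℤ) := by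
  have hsum := exc_sum_over tl hd f U
  rw [Finset.sum_eq_zero (fun v _ => hcons v)] at hsum
  have h1 : ((univ.filter (fun e => hd e ∈ U ∧ tl e ∉ U)).card : ℤ) ≤
      ∑ e ∈ univ.filter (fun e => hd e ∈ U ∧ tl e ∉ U), f e := by
    have := Finset.card_nsmul_le_sum (univ.filter (fun e => hd e ∈ U ∧ tl e ∉ U)) f 1
      (fun x _ => (hb x).1)
    simpa using this
  have h2 : (∑ e ∈ univ.filter (fun e => tl e ∈ U ∧ hd e ∉ U), f e) ≤
      M * ((univ.filter (fun e => tl e ∈ U ∧ hd e ∉ U)).card : ℤ) := by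
    have := Finset.sum_le_card_nsmul (univ.filter (fun e => tl e ∈ U ∧ hd e ∉ U)) f M
      (fun x _ => (hb x).2)
    simpa [mul_comm] using this
  linarith

lemma filter_out (src tgt : E → V) (o : E → Bool) (U : Finset V) :
    univ.filter (fun e => (o e = true ∧ src e ∈ U ∧ tgt e ∉ U) ∨
        (o e = false ∧ tgt e ∈ U ∧ src e ∉ U))
      = univ.filter (fun e => (if o e then src e else tgt e) ∈ U ∧
          (if o e then tgt e else src e) ∉ U) := by
  ext e
  simp only [mem_filter, mem_univ, true_and]
  cases ho : o e <;> simp [ho]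

lemma card_delta (src tgt : E → V) (o : E → Bool) (U : Finset V) :
    (univ.filter (fun e => (src e ∈ U ∧ tgt e ∉ U) ∨ (tgt e ∈ U ∧ src e ∉ U))).card
      = (univ.filter (fun e => (if o e then src e else tgt e) ∈ U ∧
          (if o e then tgt e else src e) ∉ U)).card
        + (univ.filter (fun e => (if o e then tgt e else src e) ∈ U ∧
            (if o e then src e else tgt e) ∉ U)).card := by
  rw [← Finset.card_union_of_disjoint]
  · congr 1
    ext e
    simp only [mem_union, mem_filter, mem_univ, true_and]
    cases ho : o e <;> simp [ho] <;> tauto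
  · rw [Finset.disjoint_left]
    intro e h1 h2
    simp only [mem_filter] at h1 h2
    tauto

end WNZF

/-- If (Ē, f) is a nowhere-zero βk-flow with c(f) ≤ α·c(f₁*) for a
min-cost nowhere-zero k-flow f₁*, then Ē is a βk-cut-balanced orientation with
c(Ē) ≤ (k−1)·α·c(Ē₂*), where Ē₂* is a min-cost k-cut-balanced orientation. -/


theorem wnzf_to_wcbo_reduction (src tgt : E → V) (c : E → Bool → ℤ)
    (hc : ∀ e b, 0 ≤ c e b) (k β : ℕ) (hk : 2 ≤ k) (hβ : 1 ≤ β)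
    (α : ℝ) (hα : 0 ≤ α)
    (o : E → Bool) (f : E → ℤ) (hof : NZFlow src tgt (β * k) o f)
    (o₁ : E → Bool) (f₁ : E → ℤ) (h₁ : NZFlow src tgt k o₁ f₁)
    (h₁min : ∀ (o' : E → Bool) (f' : E → ℤ), NZFlow src tgt k o' f' →
      costFlow c o₁ f₁ ≤ costFlow c o' f')
    (happrox : (costFlow c o f : ℝ) ≤ α * (costFlow c o₁ f₁ : ℝ))
    (o₂ : E → Bool) (h₂ : CutBalanced src tgt k o₂)
    (h₂min : ∀ o' : E → Bool, CutBalanced src tgt k o' →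
      costOrient c o₂ ≤ costOrient c o') :
    CutBalanced src tgt (β * k) o ∧
      (costOrient c o : ℝ) ≤ ((k : ℝ) - 1) * α * (costOrient c o₂ : ℝ) := by
  classical
  obtain ⟨hfb, hfc⟩ := hof
  have hk2 : (2:ℤ) ≤ (k:ℤ) := by exact_mod_cast hk
  have hm2 : 2 ≤ β * k := le_trans hk (Nat.le_mul_of_pos_left k (by omega))
  -- Part 1: the βk-flow orientation is βk-cut-balanced
  have part1 : CutBalanced src tgt (β * k) o := by
    intro U hUne hUuniv
    have hcons : ∀ v, WNZF.exc (fun e => if o e then src e else tgt e)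
        (fun e => if o e then tgt e else src e) f v = 0 := by
      intro v
      exact sub_eq_zero.mpr (hfc v).symm
    have hcount := WNZF.card_le_of_flow (fun e => if o e then src e else tgt e)
      (fun e => if o e then tgt e else src e) (((β * k : ℕ) : ℤ) - 1) f hfb hcons U
    rw [WNZF.filter_out src tgt o U, WNZF.card_delta src tgt o U]
    set B := (univ.filter (fun e => (if o e then src e else tgt e) ∈ U ∧
      (if o e then tgt e else src e) ∉ U)).card with hBdef
    set A := (univ.filter (fun e => (if o e then tgt e else src e) ∈ U ∧
      (if o e then src e else tgt e) ∉ U)).card with hAdef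
    have hm0 : (0:ℝ) < ((β * k : ℕ) : ℝ) := by
      have : 0 < β * k := by omega
      exact_mod_cast this
    have hAB : (A:ℝ) ≤ (((β * k : ℕ):ℝ) - 1) * (B:ℝ) := by exact_mod_cast hcount
    have key : ((B:ℝ) + (A:ℝ)) ≤ ((β * k : ℕ):ℝ) * (B:ℝ) := by nlinarith
    rw [ge_iff_le, Nat.cast_add]
    calc 1 / ((β * k : ℕ):ℝ) * ((B:ℝ) + (A:ℝ))
        ≤ 1 / ((β * k : ℕ):ℝ) * (((β * k : ℕ):ℝ) * (B:ℝ)) := by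
          apply mul_le_mul_of_nonneg_left key
          positivity
      _ = (B:ℝ) := by field_simp
  refine ⟨part1, ?_⟩
  -- Part 2: cost bound, via Hoffman circulation theorem on o₂
  have hK1 : (1:ℤ) ≤ (k:ℤ) - 1 := by omega
  have hcut : ∀ U : Finset V, U.Nonempty → U ≠ Finset.univ →
      ((univ.filter (fun e => (fun e => if o₂ e then tgt e else src e) e ∈ U ∧
          (fun e => if o₂ e then src e else tgt e) e ∉ U)).card : ℤ) ≤
        ((k:ℤ) - 1) * ((univ.filter (fun e => (fun e => if o₂ e then src e else tgt e) e ∈ U ∧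
          (fun e => if o₂ e then tgt e else src e) e ∉ U)).card : ℤ) := by
    intro U hUne hUuniv
    have hreal := h₂ U hUne hUuniv
    rw [WNZF.filter_out src tgt o₂ U, WNZF.card_delta src tgt o₂ U] at hreal
    set B := (univ.filter (fun e => (if o₂ e then src e else tgt e) ∈ U ∧
      (if o₂ e then tgt e else src e) ∉ U)).card with hBdef
    set A := (univ.filter (fun e => (if o₂ e then tgt e else src e) ∈ U ∧
      (if o₂ e then src e else tgt e) ∉ U)).card with hAdef
    rw [ge_iff_le] at hreal
    push_cast at hreal
    have hk0 : (0:ℝ) < (k:ℝ) := by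
      have : 0 < k := by omega
      exact_mod_cast this
    have h3 : (k:ℝ) * (1 / (k:ℝ) * ((B:ℝ) + (A:ℝ))) = (B:ℝ) + (A:ℝ) := by field_simp
    have h4 := mul_le_mul_of_nonneg_left hreal hk0.le
    rw [h3] at h4
    have h5 : (A:ℝ) ≤ ((k:ℝ) - 1) * (B:ℝ) := by nlinarith
    exact_mod_cast h5
  obtain ⟨g, hgb, hgc⟩ := WNZF.hoffman (fun e => if o₂ e then src e else tgt e)
    (fun e => if o₂ e then tgt e else src e) ((k:ℤ) - 1) hK1 hcut
  have hgNZ : NZFlow src tgt k o₂ g := by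
    refine ⟨fun e => hgb e, fun v => ?_⟩
    exact (sub_eq_zero.mp (hgc v)).symm
  have step1 : costOrient c o ≤ costFlow c o f :=
    Finset.sum_le_sum fun e _ => le_mul_of_one_le_right (hc e (o e)) (hfb e).1
  have step2 : costFlow c o₁ f₁ ≤ costFlow c o₂ g := h₁min o₂ g hgNZ
  have step3 : costFlow c o₂ g ≤ ((k:ℤ) - 1) * costOrient c o₂ := by
    unfold costFlow costOrient
    rw [Finset.mul_sum]
    refine Finset.sum_le_sum fun e _ => ?_
    calc c e (o₂ e) * g e ≤ c e (o₂ e) * ((k:ℤ) - 1) :=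
          mul_le_mul_of_nonneg_left (hgb e).2 (hc e (o₂ e))
      _ = ((k:ℤ) - 1) * c e (o₂ e) := mul_comm _ _
  have r1 : (costOrient c o : ℝ) ≤ (costFlow c o f : ℝ) := by exact_mod_cast step1
  have r2 : (costFlow c o₁ f₁ : ℝ) ≤ (((k:ℤ) - 1) * costOrient c o₂ : ℤ) := by
    exact_mod_cast le_trans step2 step3
  have r3 : α * (costFlow c o₁ f₁ : ℝ) ≤ α * ((((k:ℤ) - 1) * costOrient c o₂ : ℤ) : ℝ) :=
    mul_le_mul_of_nonneg_left r2 hα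
  have rfinal : (costOrient c o : ℝ) ≤ α * ((((k:ℤ) - 1) * costOrient c o₂ : ℤ) : ℝ) :=
    le_trans (le_trans r1 happrox) r3
  push_cast at rfinal
  calc (costOrient c o : ℝ) ≤ α * (((k:ℝ) - 1) * (costOrient c o₂ : ℝ)) := rfinal
    _ = ((k:ℝ) - 1) * α * (costOrient c o₂ : ℝ) := by ring
end
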